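/- arXiv:1711.06619 — 6 statements merged into one kernel-verified Lean document; each statement's English description precedes it below -/
import Mathlib

section
/- Let N ≥ 1 and k be integers, p a prime, and α : ℤ³ → ℂ a function with α(n,r,m) = 0 unless n ≥ 0, m ≥ 0 and 4nmN − r² ≥ 0. Then the following are equivalent. (ii): for all n,r,m ∈ ℤ one has α(n,r,pm) + p^{k−1}·[p∣r and p∣m]·α(n,r/p,m/p) = α(pn,r,m) + p^{k−1}·[p∣n and p∣r]·α(n/p,r/p,m), where a term with a bracketed divisibility condition is interpreted as 0 when the condition fails. (iii): for all integers ν,ρ,μ ≥ 0 and all n,r,m ∈ ℤ not divisible by p: α(p^ν n, p^ρ r, p^μ m) = Σ_{δ=0}^{min(ν,ρ,μ)} p^{δ(k−1)} α(p^{ν+μ−2δ} n, p^{ρ−δ} r, m); α(p^ν n, 0, p^μ m) = Σ_{δ=0}^{min(ν,μ)} p^{δ(k−1)} α(p^{ν+μ−2δ} n, 0, m); α(p^ν n, 0, 0) = σ_{k−1}(p^ν)·α(n,0,0); and α(0,0,p^μ m) = σ_{k−1}(p^μ)·α(0,0,m). -/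
open scoped Classical
open Complex Matrix Finset

noncomputable section

/-- The Siegel upper half-space of degree 2, in coordinates `(τ, z, τ′)`. -/
def H2 : Set (ℂ × ℂ × ℂ) :=
  {w | 0 < w.1.im ∧ 0 < w.2.2.im ∧ w.2.1.im ^ 2 < w.1.im * w.2.2.im}

/-- The symmetric 2×2 matrix `[[τ, z],[z, τ′]]` attached to `(τ, z, τ′)`. -/
def matOf (w : ℂ × ℂ × ℂ) : Matrix (Fin 2) (Fin 2) ℂ :=
  !![w.1, w.2.1; w.2.1, w.2.2]

/-- The triple `(Z 0 0, Z 0 1, Z 1 1)` attached to a symmetric 2×2 matrix. -/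
def tripleOf (Z : Matrix (Fin 2) (Fin 2) ℂ) : ℂ × ℂ × ℂ :=
  (Z 0 0, Z 0 1, Z 1 1)

/-- The 2×2 block at block-position `(a, b)` of a 4×4 real matrix. -/
def blk (M : Matrix (Fin 4) (Fin 4) ℝ) (a b : Fin 2) : Matrix (Fin 2) (Fin 2) ℝ :=
  Matrix.of fun i j => M ⟨2 * a.1 + i.1, by omega⟩ ⟨2 * b.1 + j.1, by omega⟩

def J4 : Matrix (Fin 4) (Fin 4) ℝ := !![0,0,-1,0; 0,0,0,-1; 1,0,0,0; 0,1,0,0]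

/-- Membership in `Sp₄(ℝ)`. -/
def IsSymplectic (M : Matrix (Fin 4) (Fin 4) ℝ) : Prop := Mᵀ * J4 * M = J4

def ZIntegral (x : ℝ) : Prop := ∃ n : ℤ, x = n

/-- The paramodular group `Σ_N` of degree 2 and level `N`, realized in `Sp₄(ℝ)`. -/
def ParamodularGroup (N : ℤ) : Set (Matrix (Fin 4) (Fin 4) ℝ) :=
  {M | IsSymplectic M ∧
    (∀ i j : Fin 4, (i, j) ≠ ((1 : Fin 4), (3 : Fin 4)) → ZIntegral (M i j)) ∧
    (∃ n : ℤ, M 1 3 = n / N) ∧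
    (∃ n : ℤ, M 0 1 = N * n) ∧ (∃ n : ℤ, M 2 1 = N * n) ∧
    (∃ n : ℤ, M 3 0 = N * n) ∧ (∃ n : ℤ, M 3 1 = N * n) ∧ (∃ n : ℤ, M 3 2 = N * n)}

/-- The Jacobi subgroup `Σ_N^J` of the paramodular group. -/
def JacobiGroup (N : ℤ) : Set (Matrix (Fin 4) (Fin 4) ℝ) :=
  {M | M ∈ ParamodularGroup N ∧
    (M 1 1 = 1 ∨ M 1 1 = -1) ∧ M 0 1 = 0 ∧ M 2 1 = 0 ∧ M 3 1 = 0 ∧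
    (M 3 3 = 1 ∨ M 3 3 = -1) ∧ M 3 0 = 0 ∧ M 3 2 = 0}

/-- The translation subgroup `Γ_N` of the Jacobi group. -/
def TransGroup (N : ℤ) : Set (Matrix (Fin 4) (Fin 4) ℝ) :=
  {M | M ∈ ParamodularGroup N ∧ blk M 0 0 = 1 ∧ blk M 1 0 = 0 ∧ blk M 1 1 = 1}

/-- The subgroup `Σ_{N,∞}` of the paramodular group (vanishing lower-left block). -/
def ParamodularInfinity (N : ℤ) : Set (Matrix (Fin 4) (Fin 4) ℝ) :=
  {M | M ∈ ParamodularGroup N ∧ blk M 1 0 = 0}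

/-- The Petersson slash action `(f |_k M)(Z) = det(CZ+D)^{-k} f((AZ+B)(CZ+D)⁻¹)`. -/
def slash (k : ℤ) (M : Matrix (Fin 4) (Fin 4) ℝ) (f : ℂ × ℂ × ℂ → ℂ)
    (w : ℂ × ℂ × ℂ) : ℂ :=
  ((blk M 1 0).map Complex.ofReal * matOf w + (blk M 1 1).map Complex.ofReal).det ^ (-k) *
    f (tripleOf (((blk M 0 0).map Complex.ofReal * matOf w + (blk M 0 1).map Complex.ofReal) *
      ((blk M 1 0).map Complex.ofReal * matOf w + (blk M 1 1).map Complex.ofReal)⁻¹))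

/-- One term of the Fourier expansion of level `N`. -/
def fourierTerm (N : ℤ) (a : ℤ → ℤ → ℤ → ℂ) (w : ℂ × ℂ × ℂ) (t : ℤ × ℤ × ℤ) : ℂ :=
  a t.1 t.2.1 t.2.2 * Complex.exp (2 * Real.pi * Complex.I *
    ((t.1 : ℂ) * w.1 + (t.2.1 : ℂ) * w.2.1 + (t.2.2 : ℂ) * (N : ℂ) * w.2.2))

/-- `f` has Fourier coefficients `a` for level `N`. -/
def HasFourierCoeffs (N : ℤ) (f : ℂ × ℂ × ℂ → ℂ) (a : ℤ → ℤ → ℤ → ℂ) : Prop :=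
  (∀ n r m : ℤ, ¬(0 ≤ n ∧ 0 ≤ m ∧ r ^ 2 ≤ 4 * n * m * N) → a n r m = 0) ∧
  ∀ w ∈ H2, Summable (fun t : ℤ × ℤ × ℤ => ‖fourierTerm N a w t‖) ∧
    HasSum (fourierTerm N a w) (f w)

/-- The divisor power sum `σ_{k-1}(t) = ∑_{δ ∣ t} δ^{k-1}`. -/
def sigmaz (k : ℤ) (t : ℕ) : ℂ := ∑ δ ∈ t.divisors, (δ : ℂ) ^ (k - 1)

/-- The nonnegative gcd of three integers. -/
def gcd3 (n r m : ℤ) : ℕ := Int.gcd (Int.gcd n r) m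

/-- The Maaß relations of weight `k` for a coefficient function. -/
def MaassRelations (k : ℤ) (a : ℤ → ℤ → ℤ → ℂ) : Prop :=
  ∀ n r m : ℤ, ¬(n = 0 ∧ r = 0 ∧ m = 0) →
    a n r m = ∑ δ ∈ (gcd3 n r m).divisors,
      (δ : ℂ) ^ (k - 1) * a (n * m / (δ : ℤ) ^ 2) (r / (δ : ℤ)) 1

/-- The operator `T_p^↑`. -/
def Tup (k : ℤ) (p : ℕ) (f : ℂ × ℂ × ℂ → ℂ) (w : ℂ × ℂ × ℂ) : ℂ :=
  (((p : ℝ) ^ ((k : ℝ) / 2) : ℝ) : ℂ) * f ((p : ℂ) * w.1, (Real.sqrt p : ℂ) * w.2.1, w.2.2) +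
  (((p : ℝ) ^ (-(k : ℝ) / 2) : ℝ) : ℂ) *
    ∑ u ∈ Finset.range p, f ((w.1 + (u : ℂ)) / (p : ℂ), w.2.1 / (Real.sqrt p : ℂ), w.2.2)

/-- The operator `T_p^↓`. -/
def Tdown (N k : ℤ) (p : ℕ) (f : ℂ × ℂ × ℂ → ℂ) (w : ℂ × ℂ × ℂ) : ℂ :=
  (((p : ℝ) ^ ((k : ℝ) / 2) : ℝ) : ℂ) * f (w.1, (Real.sqrt p : ℂ) * w.2.1, (p : ℂ) * w.2.2) +
  (((p : ℝ) ^ (-(k : ℝ) / 2) : ℝ) : ℂ) *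
    ∑ u ∈ Finset.range p,
      f (w.1, w.2.1 / (Real.sqrt p : ℂ), (w.2.2 + (u : ℂ) / (N : ℂ)) / (p : ℂ))

/-- Condition (ii) of Lemma 1 on the Fourier coefficients. -/
def HeckeCondition (k : ℤ) (p : ℕ) (a : ℤ → ℤ → ℤ → ℂ) : Prop :=
  ∀ n r m : ℤ,
    a n r (p * m) + (p : ℂ) ^ (k - 1) *
      (if (p : ℤ) ∣ r ∧ (p : ℤ) ∣ m then a n (r / p) (m / p) else 0)
    = a (p * n) r m + (p : ℂ) ^ (k - 1) *
      (if (p : ℤ) ∣ n ∧ (p : ℤ) ∣ r then a (n / p) (r / p) m else 0)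

end

section AuxMaass

open Finset

/-- Congruence helper for the weighted sums (two decorated arguments). -/
private lemma sumD_congr (q : ℂ) (D : ℕ → ℕ → ℂ) (A B x₁ x₂ y₁ y₂ : ℕ)
    (hAB : A = B) (hx : x₁ = x₂) (hy : y₁ = y₂) :
    ∑ δ ∈ Finset.range A, q ^ δ * D (x₁ - 2 * δ) (y₁ - δ)
      = ∑ δ ∈ Finset.range B, q ^ δ * D (x₂ - 2 * δ) (y₂ - δ) := by
  subst hAB; subst hx; subst hy; rfl

/-- Congruence helper for the weighted sums (one decorated argument). -/
private lemma sumE_congr (q : ℂ) (E : ℕ → ℂ) (A B x₁ x₂ : ℕ)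
    (hAB : A = B) (hx : x₁ = x₂) :
    ∑ δ ∈ Finset.range A, q ^ δ * E (x₁ - 2 * δ)
      = ∑ δ ∈ Finset.range B, q ^ δ * E (x₂ - 2 * δ) := by
  subst hAB; subst hx; rfl

private lemma shiftK (q : ℂ) (D : ℕ → ℕ → ℂ) (L x y x' y' : ℕ)
    (hx : x' = x + 2) (hy : y' = y + 1) :
    q * ∑ δ ∈ Finset.range (L + 1), q ^ δ * D (x - 2 * δ) (y - δ)
      = (∑ δ ∈ Finset.range (L + 2), q ^ δ * D (x' - 2 * δ) (y' - δ)) - D x' y' := by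
  subst hx; subst hy
  rw [Finset.sum_range_succ' (fun δ => q ^ δ * D (x + 2 - 2 * δ) (y + 1 - δ)) (L + 1)]
  simp only [pow_zero, one_mul, Nat.mul_zero, Nat.sub_zero]
  rw [add_sub_cancel_right, Finset.mul_sum]
  refine Finset.sum_congr rfl fun i _ => ?_
  rw [show x + 2 - 2 * (i + 1) = x - 2 * i by omega, show y + 1 - (i + 1) = y - i by omega,
    pow_succ]
  ring

private lemma shiftK2 (q : ℂ) (E : ℕ → ℂ) (L x x' : ℕ) (hx : x' = x + 2) :
    q * ∑ δ ∈ Finset.range (L + 1), q ^ δ * E (x - 2 * δ)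
      = (∑ δ ∈ Finset.range (L + 2), q ^ δ * E (x' - 2 * δ)) - E x' := by
  subst hx
  rw [Finset.sum_range_succ' (fun δ => q ^ δ * E (x + 2 - 2 * δ)) (L + 1)]
  simp only [pow_zero, one_mul, Nat.mul_zero, Nat.sub_zero]
  rw [add_sub_cancel_right, Finset.mul_sum]
  refine Finset.sum_congr rfl fun i _ => ?_
  rw [show x + 2 - 2 * (i + 1) = x - 2 * i by omega, pow_succ]
  ring

/-- The central combinatorial identity behind the Maaß/Hecke recursion. -/
private lemma keyK (q : ℂ) (D : ℕ → ℕ → ℂ) (ν ρ μ : ℕ) :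
    (∑ δ ∈ Finset.range (min ν (min ρ (μ + 1)) + 1),
        q ^ δ * D (ν + (μ + 1) - 2 * δ) (ρ - δ))
    + q * (if 1 ≤ ρ ∧ 1 ≤ μ then
        ∑ δ ∈ Finset.range (min ν (min (ρ - 1) (μ - 1)) + 1),
          q ^ δ * D (ν + (μ - 1) - 2 * δ) (ρ - 1 - δ) else 0)
    = (∑ δ ∈ Finset.range (min (ν + 1) (min ρ μ) + 1),
        q ^ δ * D (ν + 1 + μ - 2 * δ) (ρ - δ))
    + q * (if 1 ≤ ν ∧ 1 ≤ ρ then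
        ∑ δ ∈ Finset.range (min (ν - 1) (min (ρ - 1) μ) + 1),
          q ^ δ * D (ν - 1 + μ - 2 * δ) (ρ - 1 - δ) else 0) := by
  by_cases hc1 : 1 ≤ ρ ∧ 1 ≤ μ
  · obtain ⟨hρ1, hμ1⟩ := hc1
    by_cases hc2 : 1 ≤ ν ∧ 1 ≤ ρ
    · obtain ⟨hν1, -⟩ := hc2
      rw [if_pos ⟨hρ1, hμ1⟩, if_pos ⟨hν1, hρ1⟩,
        shiftK q D (min ν (min (ρ - 1) (μ - 1))) (ν + (μ - 1)) (ρ - 1) (ν + (μ + 1)) ρ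
          (by omega) (by omega),
        shiftK q D (min (ν - 1) (min (ρ - 1) μ)) (ν - 1 + μ) (ρ - 1) (ν + (μ + 1)) ρ
          (by omega) (by omega),
        sumD_congr q D (min (ν + 1) (min ρ μ) + 1) (min ν (min (ρ - 1) (μ - 1)) + 2)
          (ν + 1 + μ) (ν + (μ + 1)) ρ ρ (by omega) (by omega) rfl,
        sumD_congr q D (min ν (min ρ (μ + 1)) + 1) (min (ν - 1) (min (ρ - 1) μ) + 2)
          (ν + (μ + 1)) (ν + (μ + 1)) ρ ρ (by omega) rfl rfl]
      ring
    · obtain rfl : ν = 0 := by omega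
      rw [if_pos ⟨hρ1, hμ1⟩, if_neg hc2,
        shiftK q D (min 0 (min (ρ - 1) (μ - 1))) (0 + (μ - 1)) (ρ - 1) (0 + (μ + 1)) ρ
          (by omega) (by omega),
        sumD_congr q D (min (0 + 1) (min ρ μ) + 1) (min 0 (min (ρ - 1) (μ - 1)) + 2)
          (0 + 1 + μ) (0 + (μ + 1)) ρ ρ (by omega) (by omega) rfl,
        show min 0 (min ρ (μ + 1)) + 1 = 1 by omega, Finset.sum_range_one,
        show 0 + (μ + 1) - 2 * 0 = 0 + (μ + 1) by omega, show ρ - 0 = ρ by omega]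
      ring
  · by_cases hc2 : 1 ≤ ν ∧ 1 ≤ ρ
    · obtain ⟨hν1, hρ1⟩ := hc2
      obtain rfl : μ = 0 := by omega
      rw [if_neg hc1, if_pos ⟨hν1, hρ1⟩,
        shiftK q D (min (ν - 1) (min (ρ - 1) 0)) (ν - 1 + 0) (ρ - 1) (ν + (0 + 1)) ρ
          (by omega) (by omega),
        sumD_congr q D (min ν (min ρ (0 + 1)) + 1) (min (ν - 1) (min (ρ - 1) 0) + 2)
          (ν + (0 + 1)) (ν + (0 + 1)) ρ ρ (by omega) rfl rfl,
        show min (ν + 1) (min ρ 0) + 1 = 1 by omega, Finset.sum_range_one,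
        show ν + 1 + 0 - 2 * 0 = ν + (0 + 1) by omega, show ρ - 0 = ρ by omega]
      ring
    · rw [if_neg hc1, if_neg hc2]
      by_cases hρ : ρ = 0
      · subst hρ
        rw [sumD_congr q D (min ν (min 0 (μ + 1)) + 1) (min (ν + 1) (min 0 μ) + 1)
          (ν + (μ + 1)) (ν + 1 + μ) 0 0 (by omega) (by omega) rfl]
      · obtain rfl : μ = 0 := by omega
        obtain rfl : ν = 0 := by omega
        rw [sumD_congr q D (min 0 (min ρ (0 + 1)) + 1) (min (0 + 1) (min ρ 0) + 1)
          (0 + (0 + 1)) (0 + 1 + 0) ρ ρ (by omega) (by omega) rfl]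

/-- One-variable version of the key identity. -/
private lemma keyK2 (q : ℂ) (E : ℕ → ℂ) (ν μ : ℕ) :
    (∑ δ ∈ Finset.range (min ν (μ + 1) + 1), q ^ δ * E (ν + (μ + 1) - 2 * δ))
    + q * (if 1 ≤ μ then
        ∑ δ ∈ Finset.range (min ν (μ - 1) + 1), q ^ δ * E (ν + (μ - 1) - 2 * δ) else 0)
    = (∑ δ ∈ Finset.range (min (ν + 1) μ + 1), q ^ δ * E (ν + 1 + μ - 2 * δ))
    + q * (if 1 ≤ ν then
        ∑ δ ∈ Finset.range (min (ν - 1) μ + 1), q ^ δ * E (ν - 1 + μ - 2 * δ) else 0) := by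
  by_cases hc1 : 1 ≤ μ
  · by_cases hc2 : 1 ≤ ν
    · rw [if_pos hc1, if_pos hc2,
        shiftK2 q E (min ν (μ - 1)) (ν + (μ - 1)) (ν + (μ + 1)) (by omega),
        shiftK2 q E (min (ν - 1) μ) (ν - 1 + μ) (ν + (μ + 1)) (by omega),
        sumE_congr q E (min (ν + 1) μ + 1) (min ν (μ - 1) + 2)
          (ν + 1 + μ) (ν + (μ + 1)) (by omega) (by omega),
        sumE_congr q E (min ν (μ + 1) + 1) (min (ν - 1) μ + 2)
          (ν + (μ + 1)) (ν + (μ + 1)) (by omega) rfl]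
      ring
    · obtain rfl : ν = 0 := by omega
      rw [if_pos hc1, if_neg hc2,
        shiftK2 q E (min 0 (μ - 1)) (0 + (μ - 1)) (0 + (μ + 1)) (by omega),
        sumE_congr q E (min (0 + 1) μ + 1) (min 0 (μ - 1) + 2)
          (0 + 1 + μ) (0 + (μ + 1)) (by omega) (by omega),
        show min 0 (μ + 1) + 1 = 1 by omega, Finset.sum_range_one,
        show 0 + (μ + 1) - 2 * 0 = 0 + (μ + 1) by omega]
      ring
  · by_cases hc2 : 1 ≤ ν
    · obtain rfl : μ = 0 := by omega
      rw [if_neg hc1, if_pos hc2,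
        shiftK2 q E (min (ν - 1) 0) (ν - 1 + 0) (ν + (0 + 1)) (by omega),
        sumE_congr q E (min ν (0 + 1) + 1) (min (ν - 1) 0 + 2)
          (ν + (0 + 1)) (ν + (0 + 1)) (by omega) rfl,
        show min (ν + 1) 0 + 1 = 1 by omega, Finset.sum_range_one,
        show ν + 1 + 0 - 2 * 0 = ν + (0 + 1) by omega]
      ring
    · obtain rfl : μ = 0 := by omega
      obtain rfl : ν = 0 := by omega
      rw [sumE_congr q E (min 0 (0 + 1) + 1) (min (0 + 1) 0 + 1)
          (0 + (0 + 1)) (0 + 1 + 0) (by omega) (by omega)]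

private lemma pdvd_iff (p : ℕ) (hp : p.Prime) {x : ℤ} (hx : ¬((p : ℤ) ∣ x)) (s : ℕ) :
    (p : ℤ) ∣ (p : ℤ) ^ s * x ↔ 1 ≤ s := by
  constructor
  · intro h
    by_contra hs
    obtain rfl : s = 0 := by omega
    simp only [pow_zero, one_mul] at h
    exact hx h
  · intro hs
    obtain ⟨t, rfl⟩ : ∃ t, s = t + 1 := ⟨s - 1, by omega⟩
    exact ⟨(p : ℤ) ^ t * x, by ring⟩

private lemma pdiv_eq (p : ℕ) (hp : 0 < p) (x : ℤ) (s : ℕ) (hs : 1 ≤ s) :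
    ((p : ℤ) ^ s * x) / (p : ℤ) = (p : ℤ) ^ (s - 1) * x := by
  obtain ⟨t, rfl⟩ : ∃ t, s = t + 1 := ⟨s - 1, by omega⟩
  rw [show ((p : ℤ) ^ (t + 1) * x) = (p : ℤ) * ((p : ℤ) ^ t * x) by ring,
    Int.mul_ediv_cancel_left _ (by exact_mod_cast hp.ne')]
  simp

private lemma not_dvd_one (p : ℕ) (hp : p.Prime) : ¬((p : ℤ) ∣ (1 : ℤ)) := by
  intro hd
  have h1 := Int.le_of_dvd one_pos hd
  have h2 := hp.two_le
  omega

private lemma brackL (p : ℕ) (hp : p.Prime) (a : ℤ → ℤ → ℤ → ℂ) (w : ℤ) {u v : ℤ}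
    (hu : ¬((p : ℤ) ∣ u)) (hv : ¬((p : ℤ) ∣ v)) (s t : ℕ) :
    (if (p : ℤ) ∣ (p : ℤ) ^ s * u ∧ (p : ℤ) ∣ (p : ℤ) ^ t * v
      then a w (((p : ℤ) ^ s * u) / (p : ℤ)) (((p : ℤ) ^ t * v) / (p : ℤ)) else 0)
    = (if 1 ≤ s ∧ 1 ≤ t then a w ((p : ℤ) ^ (s - 1) * u) ((p : ℤ) ^ (t - 1) * v) else 0) := by
  by_cases h : 1 ≤ s ∧ 1 ≤ t
  · rw [if_pos ⟨(pdvd_iff p hp hu s).mpr h.1, (pdvd_iff p hp hv t).mpr h.2⟩, if_pos h,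
      pdiv_eq p hp.pos u s h.1, pdiv_eq p hp.pos v t h.2]
  · rw [if_neg (fun hc => h ⟨(pdvd_iff p hp hu s).mp hc.1, (pdvd_iff p hp hv t).mp hc.2⟩),
      if_neg h]

private lemma brackR (p : ℕ) (hp : p.Prime) (a : ℤ → ℤ → ℤ → ℂ) (w : ℤ) {u v : ℤ}
    (hu : ¬((p : ℤ) ∣ u)) (hv : ¬((p : ℤ) ∣ v)) (s t : ℕ) :
    (if (p : ℤ) ∣ (p : ℤ) ^ s * u ∧ (p : ℤ) ∣ (p : ℤ) ^ t * v
      then a (((p : ℤ) ^ s * u) / (p : ℤ)) (((p : ℤ) ^ t * v) / (p : ℤ)) w else 0)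
    = (if 1 ≤ s ∧ 1 ≤ t then a ((p : ℤ) ^ (s - 1) * u) ((p : ℤ) ^ (t - 1) * v) w else 0) := by
  by_cases h : 1 ≤ s ∧ 1 ≤ t
  · rw [if_pos ⟨(pdvd_iff p hp hu s).mpr h.1, (pdvd_iff p hp hv t).mpr h.2⟩, if_pos h,
      pdiv_eq p hp.pos u s h.1, pdiv_eq p hp.pos v t h.2]
  · rw [if_neg (fun hc => h ⟨(pdvd_iff p hp hu s).mp hc.1, (pdvd_iff p hp hv t).mp hc.2⟩),
      if_neg h]

private lemma brack0L (p : ℕ) (hp : p.Prime) (a : ℤ → ℤ → ℤ → ℂ) (w : ℤ) {v : ℤ}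
    (hv : ¬((p : ℤ) ∣ v)) (t : ℕ) :
    (if (p : ℤ) ∣ (0 : ℤ) ∧ (p : ℤ) ∣ (p : ℤ) ^ t * v
      then a w ((0 : ℤ) / (p : ℤ)) (((p : ℤ) ^ t * v) / (p : ℤ)) else 0)
    = (if 1 ≤ t then a w 0 ((p : ℤ) ^ (t - 1) * v) else 0) := by
  by_cases h : 1 ≤ t
  · rw [if_pos ⟨dvd_zero _, (pdvd_iff p hp hv t).mpr h⟩, if_pos h, Int.zero_ediv,
      pdiv_eq p hp.pos v t h]
  · rw [if_neg (fun hc => h ((pdvd_iff p hp hv t).mp hc.2)), if_neg h]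

private lemma brack0R (p : ℕ) (hp : p.Prime) (a : ℤ → ℤ → ℤ → ℂ) (w : ℤ) {u : ℤ}
    (hu : ¬((p : ℤ) ∣ u)) (s : ℕ) :
    (if (p : ℤ) ∣ (p : ℤ) ^ s * u ∧ (p : ℤ) ∣ (0 : ℤ)
      then a (((p : ℤ) ^ s * u) / (p : ℤ)) ((0 : ℤ) / (p : ℤ)) w else 0)
    = (if 1 ≤ s then a ((p : ℤ) ^ (s - 1) * u) 0 w else 0) := by
  by_cases h : 1 ≤ s
  · rw [if_pos ⟨(pdvd_iff p hp hu s).mpr h, dvd_zero _⟩, if_pos h, Int.zero_ediv,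
      pdiv_eq p hp.pos u s h]
  · rw [if_neg (fun hc => h ((pdvd_iff p hp hu s).mp hc.1)), if_neg h]

private lemma qpow (k : ℤ) (p : ℕ) (δ : ℕ) :
    (p : ℂ) ^ ((δ : ℤ) * (k - 1)) = ((p : ℂ) ^ (k - 1)) ^ δ := by
  rw [← zpow_natCast ((p : ℂ) ^ (k - 1)) δ, ← _root_.zpow_mul, mul_comm]

private lemma sigma_pow_eq (k : ℤ) (p : ℕ) (hp : p.Prime) (j : ℕ) :
    sigmaz k (p ^ j) = ∑ i ∈ Finset.range (j + 1), ((p : ℂ) ^ (k - 1)) ^ i := by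
  unfold sigmaz
  rw [Nat.divisors_prime_pow hp, Finset.sum_map]
  refine Finset.sum_congr rfl fun i _ => ?_
  simp only [Function.Embedding.coeFn_mk]
  push_cast
  rw [← zpow_natCast ((p : ℂ)) i, ← _root_.zpow_mul, mul_comm, _root_.zpow_mul, zpow_natCast]

private lemma sigma_rec (k : ℤ) (p : ℕ) (hp : p.Prime) (j : ℕ) :
    sigmaz k (p ^ (j + 1)) + (p : ℂ) ^ (k - 1) * (if 1 ≤ j then sigmaz k (p ^ (j - 1)) else 0)
    = sigmaz k (p ^ j) + (p : ℂ) ^ (k - 1) * sigmaz k (p ^ j) := by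
  rcases Nat.eq_zero_or_pos j with rfl | hj
  · rw [if_neg (by omega : ¬(1 : ℕ) ≤ 0), sigma_pow_eq k p hp 1, sigma_pow_eq k p hp 0]
    simp [Finset.sum_range_succ]
  · obtain ⟨i, rfl⟩ : ∃ i, j = i + 1 := ⟨j - 1, by omega⟩
    rw [if_pos (by omega), sigma_pow_eq k p hp (i + 1 + 1), sigma_pow_eq k p hp (i + 1 - 1),
      sigma_pow_eq k p hp (i + 1), Nat.add_sub_cancel]
    have hs : ∀ L : ℕ, ∑ x ∈ Finset.range (L + 1), ((p : ℂ) ^ (k - 1)) ^ x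
        = (p : ℂ) ^ (k - 1) * ∑ x ∈ Finset.range L, ((p : ℂ) ^ (k - 1)) ^ x + 1 :=
      fun L => geom_sum_succ
    simp only [hs]
    ring

private lemma int_fact (p : ℕ) (hp : p.Prime) (n : ℤ) (hn : n ≠ 0) :
    ∃ ν : ℕ, ∃ n₀ : ℤ, ¬((p : ℤ) ∣ n₀) ∧ n = (p : ℤ) ^ ν * n₀ := by
  obtain ⟨ν, c, hc, hnc⟩ := Nat.exists_eq_pow_mul_and_not_dvd (Int.natAbs_ne_zero.mpr hn) p
    hp.ne_one
  rcases Int.natAbs_eq n with h | h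
  · exact ⟨ν, (c : ℤ), fun hd => hc (Int.natCast_dvd_natCast.mp hd),
      by rw [h, hnc]; push_cast; ring⟩
  · exact ⟨ν, -(c : ℤ), fun hd => hc (Int.natCast_dvd_natCast.mp (dvd_neg.mp hd)),
      by rw [h, hnc]; push_cast; ring⟩

private lemma fwd1 (k : ℤ) (p : ℕ) (hp : p.Prime) (a : ℤ → ℤ → ℤ → ℂ)
    (hii : HeckeCondition k p a) (n r m : ℤ)
    (hn : ¬((p : ℤ) ∣ n)) (hr : ¬((p : ℤ) ∣ r)) (hm : ¬((p : ℤ) ∣ m)) :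
    ∀ μ ν ρ : ℕ, a ((p : ℤ) ^ ν * n) ((p : ℤ) ^ ρ * r) ((p : ℤ) ^ μ * m)
      = ∑ δ ∈ Finset.range (min ν (min ρ μ) + 1),
          ((p : ℂ) ^ (k - 1)) ^ δ * a ((p : ℤ) ^ (ν + μ - 2 * δ) * n) ((p : ℤ) ^ (ρ - δ) * r) m := by
  intro μ
  induction μ using Nat.strong_induction_on with
  | _ μ IH =>
    rcases Nat.eq_zero_or_pos μ with rfl | hpos
    · intro ν ρ; simp
    · obtain ⟨μ, rfl⟩ : ∃ μ', μ = μ' + 1 := ⟨μ - 1, by omega⟩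
      intro ν ρ
      have H := hii ((p : ℤ) ^ ν * n) ((p : ℤ) ^ ρ * r) ((p : ℤ) ^ μ * m)
      rw [show (p : ℤ) * ((p : ℤ) ^ μ * m) = (p : ℤ) ^ (μ + 1) * m by ring,
        show (p : ℤ) * ((p : ℤ) ^ ν * n) = (p : ℤ) ^ (ν + 1) * n by ring,
        brackL p hp a ((p : ℤ) ^ ν * n) hr hm ρ μ,
        brackR p hp a ((p : ℤ) ^ μ * m) hn hr ν ρ] at H
      rw [IH μ (by omega) (ν + 1) ρ, IH (μ - 1) (by omega) ν (ρ - 1),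
        IH μ (by omega) (ν - 1) (ρ - 1)] at H
      have K := keyK ((p : ℂ) ^ (k - 1))
        (fun e f => a ((p : ℤ) ^ e * n) ((p : ℤ) ^ f * r) m) ν ρ μ
      linear_combination H - K

private lemma fwd2 (k : ℤ) (p : ℕ) (hp : p.Prime) (a : ℤ → ℤ → ℤ → ℂ)
    (hii : HeckeCondition k p a) (n m : ℤ)
    (hn : ¬((p : ℤ) ∣ n)) (hm : ¬((p : ℤ) ∣ m)) :
    ∀ μ ν : ℕ, a ((p : ℤ) ^ ν * n) 0 ((p : ℤ) ^ μ * m)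
      = ∑ δ ∈ Finset.range (min ν μ + 1),
          ((p : ℂ) ^ (k - 1)) ^ δ * a ((p : ℤ) ^ (ν + μ - 2 * δ) * n) 0 m := by
  intro μ
  induction μ using Nat.strong_induction_on with
  | _ μ IH =>
    rcases Nat.eq_zero_or_pos μ with rfl | hpos
    · intro ν; simp
    · obtain ⟨μ, rfl⟩ : ∃ μ', μ = μ' + 1 := ⟨μ - 1, by omega⟩
      intro ν
      have H := hii ((p : ℤ) ^ ν * n) 0 ((p : ℤ) ^ μ * m)
      rw [show (p : ℤ) * ((p : ℤ) ^ μ * m) = (p : ℤ) ^ (μ + 1) * m by ring,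
        show (p : ℤ) * ((p : ℤ) ^ ν * n) = (p : ℤ) ^ (ν + 1) * n by ring,
        brack0L p hp a ((p : ℤ) ^ ν * n) hm μ,
        brack0R p hp a ((p : ℤ) ^ μ * m) hn ν] at H
      rw [IH μ (by omega) (ν + 1), IH (μ - 1) (by omega) ν, IH μ (by omega) (ν - 1)] at H
      have K := keyK2 ((p : ℂ) ^ (k - 1)) (fun e => a ((p : ℤ) ^ e * n) 0 m) ν μ
      linear_combination H - K

private lemma fwd3 (k : ℤ) (p : ℕ) (hp : p.Prime) (a : ℤ → ℤ → ℤ → ℂ)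
    (hii : HeckeCondition k p a) (n : ℤ) (hn : ¬((p : ℤ) ∣ n)) :
    ∀ ν : ℕ, a ((p : ℤ) ^ ν * n) 0 0 = sigmaz k (p ^ ν) * a n 0 0 := by
  intro ν
  induction ν using Nat.strong_induction_on with
  | _ ν IH =>
    rcases Nat.eq_zero_or_pos ν with rfl | hpos
    · simp [sigmaz]
    · obtain ⟨ν, rfl⟩ : ∃ ν', ν = ν' + 1 := ⟨ν - 1, by omega⟩
      have H := hii ((p : ℤ) ^ ν * n) 0 0
      rw [mul_zero, show (p : ℤ) * ((p : ℤ) ^ ν * n) = (p : ℤ) ^ (ν + 1) * n by ring,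
        brack0R p hp a 0 hn ν,
        if_pos (⟨dvd_zero _, dvd_zero _⟩ : (p : ℤ) ∣ (0 : ℤ) ∧ (p : ℤ) ∣ (0 : ℤ)),
        Int.zero_ediv] at H
      have R := sigma_rec k p hp ν
      by_cases hν : 1 ≤ ν
      · rw [if_pos hν] at H
        rw [IH ν (by omega), IH (ν - 1) (by omega)] at H
        rw [if_pos hν] at R
        linear_combination -H - a n 0 0 * R
      · rw [if_neg hν] at H
        rw [if_neg hν] at R
        obtain rfl : ν = 0 := by omega
        rw [IH 0 (by omega)] at H
        linear_combination -H - a n 0 0 * R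

private lemma fwd4 (k : ℤ) (p : ℕ) (hp : p.Prime) (a : ℤ → ℤ → ℤ → ℂ)
    (hii : HeckeCondition k p a) (m : ℤ) (hm : ¬((p : ℤ) ∣ m)) :
    ∀ μ : ℕ, a 0 0 ((p : ℤ) ^ μ * m) = sigmaz k (p ^ μ) * a 0 0 m := by
  intro μ
  induction μ using Nat.strong_induction_on with
  | _ μ IH =>
    rcases Nat.eq_zero_or_pos μ with rfl | hpos
    · simp [sigmaz]
    · obtain ⟨μ, rfl⟩ : ∃ μ', μ = μ' + 1 := ⟨μ - 1, by omega⟩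
      have H := hii 0 0 ((p : ℤ) ^ μ * m)
      rw [mul_zero, show (p : ℤ) * ((p : ℤ) ^ μ * m) = (p : ℤ) ^ (μ + 1) * m by ring,
        brack0L p hp a 0 hm μ,
        if_pos (⟨dvd_zero _, dvd_zero _⟩ : (p : ℤ) ∣ (0 : ℤ) ∧ (p : ℤ) ∣ (0 : ℤ)),
        Int.zero_ediv] at H
      have R := sigma_rec k p hp μ
      by_cases hμ : 1 ≤ μ
      · rw [if_pos hμ] at H
        rw [IH μ (by omega), IH (μ - 1) (by omega)] at H
        rw [if_pos hμ] at R
        linear_combination H - a 0 0 m * R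
      · rw [if_neg hμ] at H
        rw [if_neg hμ] at R
        obtain rfl : μ = 0 := by omega
        rw [IH 0 (by omega)] at H
        linear_combination H - a 0 0 m * R

end AuxMaass

/-- Lemma 1, (ii) ⇔ (iii): coefficient-level equivalence. -/
theorem lemma1_ii_iff_iii (N k : ℤ) (hN : 1 ≤ N) (p : ℕ) (hp : p.Prime)
    (a : ℤ → ℤ → ℤ → ℂ)
    (hsupp : ∀ n r m : ℤ, ¬(0 ≤ n ∧ 0 ≤ m ∧ r ^ 2 ≤ 4 * n * m * N) → a n r m = 0) :
    HeckeCondition k p a ↔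
    (∀ ν ρ μ : ℕ, ∀ n r m : ℤ,
      ¬((p : ℤ) ∣ n) → ¬((p : ℤ) ∣ r) → ¬((p : ℤ) ∣ m) →
      (a ((p : ℤ) ^ ν * n) ((p : ℤ) ^ ρ * r) ((p : ℤ) ^ μ * m)
        = ∑ δ ∈ Finset.range (min ν (min ρ μ) + 1),
            (p : ℂ) ^ ((δ : ℤ) * (k - 1)) *
              a ((p : ℤ) ^ (ν + μ - 2 * δ) * n) ((p : ℤ) ^ (ρ - δ) * r) m) ∧
      (a ((p : ℤ) ^ ν * n) 0 ((p : ℤ) ^ μ * m)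
        = ∑ δ ∈ Finset.range (min ν μ + 1),
            (p : ℂ) ^ ((δ : ℤ) * (k - 1)) * a ((p : ℤ) ^ (ν + μ - 2 * δ) * n) 0 m) ∧
      (a ((p : ℤ) ^ ν * n) 0 0 = sigmaz k (p ^ ν) * a n 0 0) ∧
      (a 0 0 ((p : ℤ) ^ μ * m) = sigmaz k (p ^ μ) * a 0 0 m)) := by
  constructor
  · intro hii ν ρ μ n r m hn hr hm
    refine ⟨?_, ?_, ?_, ?_⟩
    · rw [fwd1 k p hp a hii n r m hn hr hm μ ν ρ]
      exact Finset.sum_congr rfl fun δ _ => by rw [qpow k p δ]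
    · rw [fwd2 k p hp a hii n m hn hm μ ν]
      exact Finset.sum_congr rfl fun δ _ => by rw [qpow k p δ]
    · exact fwd3 k p hp a hii n hn ν
    · exact fwd4 k p hp a hii m hm μ
  · intro h n r m
    by_cases hr : r = 0
    · subst hr
      by_cases hn : n = 0
      · subst hn
        by_cases hm : m = 0
        · subst hm
          simp [Int.zero_ediv]
        · obtain ⟨μ, m₀, hm₀, rfl⟩ := int_fact p hp m hm
          have F4 : ∀ j : ℕ, a 0 0 ((p : ℤ) ^ j * m₀) = sigmaz k (p ^ j) * a 0 0 m₀ :=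
            fun j => (h 0 0 j 1 1 m₀ (not_dvd_one p hp) (not_dvd_one p hp) hm₀).2.2.2
          rw [mul_zero, show (p : ℤ) * ((p : ℤ) ^ μ * m₀) = (p : ℤ) ^ (μ + 1) * m₀ by ring,
            if_pos (⟨dvd_zero _, dvd_zero _⟩ : (p : ℤ) ∣ (0 : ℤ) ∧ (p : ℤ) ∣ (0 : ℤ)),
            Int.zero_ediv]
          by_cases hμ : 1 ≤ μ
          · have hcond : (p : ℤ) ∣ (0 : ℤ) ∧ (p : ℤ) ∣ (p : ℤ) ^ μ * m₀ :=
              ⟨dvd_zero _, (pdvd_iff p hp hm₀ μ).mpr hμ⟩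
            rw [if_pos hcond, pdiv_eq p hp.pos m₀ μ hμ, F4 (μ + 1), F4 (μ - 1), F4 μ]
            have R := sigma_rec k p hp μ
            rw [if_pos hμ] at R
            linear_combination a 0 0 m₀ * R
          · obtain rfl : μ = 0 := by omega
            have hnc : ¬((p : ℤ) ∣ (0 : ℤ) ∧ (p : ℤ) ∣ (p : ℤ) ^ 0 * m₀) :=
              fun hc => hm₀ (by simpa using hc.2)
            rw [if_neg hnc, F4 (0 + 1), F4 0]
            rw [sigma_pow_eq k p hp (0 + 1), sigma_pow_eq k p hp 0]
            simp [Finset.sum_range_succ]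
            ring
      · by_cases hm : m = 0
        · subst hm
          obtain ⟨ν, n₀, hn₀, rfl⟩ := int_fact p hp n hn
          have F3 : ∀ j : ℕ, a ((p : ℤ) ^ j * n₀) 0 0 = sigmaz k (p ^ j) * a n₀ 0 0 :=
            fun j => (h j 0 0 n₀ 1 1 hn₀ (not_dvd_one p hp) (not_dvd_one p hp)).2.2.1
          rw [mul_zero, show (p : ℤ) * ((p : ℤ) ^ ν * n₀) = (p : ℤ) ^ (ν + 1) * n₀ by ring,
            if_pos (⟨dvd_zero _, dvd_zero _⟩ : (p : ℤ) ∣ (0 : ℤ) ∧ (p : ℤ) ∣ (0 : ℤ)),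
            Int.zero_ediv]
          by_cases hν : 1 ≤ ν
          · have hcond : (p : ℤ) ∣ (p : ℤ) ^ ν * n₀ ∧ (p : ℤ) ∣ (0 : ℤ) :=
              ⟨(pdvd_iff p hp hn₀ ν).mpr hν, dvd_zero _⟩
            rw [if_pos hcond, pdiv_eq p hp.pos n₀ ν hν, F3 (ν + 1), F3 (ν - 1), F3 ν]
            have R := sigma_rec k p hp ν
            rw [if_pos hν] at R
            linear_combination (-(a n₀ 0 0)) * R
          · obtain rfl : ν = 0 := by omega
            have hnc : ¬((p : ℤ) ∣ (p : ℤ) ^ 0 * n₀ ∧ (p : ℤ) ∣ (0 : ℤ)) :=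
              fun hc => hn₀ (by simpa using hc.1)
            rw [if_neg hnc, F3 (0 + 1), F3 0]
            rw [sigma_pow_eq k p hp (0 + 1), sigma_pow_eq k p hp 0]
            simp [Finset.sum_range_succ]
            ring
        · obtain ⟨ν, n₀, hn₀, rfl⟩ := int_fact p hp n hn
          obtain ⟨μ, m₀, hm₀, rfl⟩ := int_fact p hp m hm
          have F2 : ∀ i j : ℕ, a ((p : ℤ) ^ i * n₀) 0 ((p : ℤ) ^ j * m₀)
              = ∑ δ ∈ Finset.range (min i j + 1),
                  (p : ℂ) ^ ((δ : ℤ) * (k - 1)) * a ((p : ℤ) ^ (i + j - 2 * δ) * n₀) 0 m₀ :=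
            fun i j => (h i 0 j n₀ 1 m₀ hn₀ (not_dvd_one p hp) hm₀).2.1
          rw [show (p : ℤ) * ((p : ℤ) ^ μ * m₀) = (p : ℤ) ^ (μ + 1) * m₀ by ring,
            show (p : ℤ) * ((p : ℤ) ^ ν * n₀) = (p : ℤ) ^ (ν + 1) * n₀ by ring,
            brack0L p hp a ((p : ℤ) ^ ν * n₀) hm₀ μ,
            brack0R p hp a ((p : ℤ) ^ μ * m₀) hn₀ ν,
            F2 ν (μ + 1), F2 ν (μ - 1), F2 (ν + 1) μ, F2 (ν - 1) μ]
          simp only [qpow k p]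
          exact keyK2 ((p : ℂ) ^ (k - 1)) (fun e => a ((p : ℤ) ^ e * n₀) 0 m₀) ν μ
    · by_cases hn : n = 0
      · subst hn
        have Z : ∀ (r' m' : ℤ), r' ≠ 0 → a 0 r' m' = 0 := by
          intro r' m' hr'
          refine hsupp 0 r' m' ?_
          rintro ⟨-, -, h3⟩
          have hpos : (0 : ℤ) < r' ^ 2 := by positivity
          nlinarith
        have hrp : ∀ (_ : (p : ℤ) ∣ r), r / (p : ℤ) ≠ 0 := fun hd h0 => hr
          (by rw [← Int.ediv_mul_cancel hd, h0, zero_mul])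
        rw [mul_zero, Z r ((p : ℤ) * m) hr, Z r m hr, Int.zero_ediv]
        by_cases hd : (p : ℤ) ∣ r
        · rw [if_pos (⟨dvd_zero _, hd⟩ : (p : ℤ) ∣ (0 : ℤ) ∧ (p : ℤ) ∣ r),
            Z (r / (p : ℤ)) m (hrp hd)]
          by_cases hdm : (p : ℤ) ∣ m
          · rw [if_pos (⟨hd, hdm⟩ : (p : ℤ) ∣ r ∧ (p : ℤ) ∣ m),
              Z (r / (p : ℤ)) (m / (p : ℤ)) (hrp hd)]
          · rw [if_neg (fun hc : (p : ℤ) ∣ r ∧ (p : ℤ) ∣ m => hdm hc.2)]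
        · rw [if_neg (fun hc : (p : ℤ) ∣ r ∧ (p : ℤ) ∣ m => hd hc.1),
            if_neg (fun hc : (p : ℤ) ∣ (0 : ℤ) ∧ (p : ℤ) ∣ r => hd hc.2)]
      · by_cases hm : m = 0
        · subst hm
          have Z : ∀ (n' r' : ℤ), r' ≠ 0 → a n' r' 0 = 0 := by
            intro n' r' hr'
            refine hsupp n' r' 0 ?_
            rintro ⟨-, -, h3⟩
            have hpos : (0 : ℤ) < r' ^ 2 := by positivity
            nlinarith
          have hrp : ∀ (_ : (p : ℤ) ∣ r), r / (p : ℤ) ≠ 0 := fun hd h0 => hr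
            (by rw [← Int.ediv_mul_cancel hd, h0, zero_mul])
          rw [mul_zero, Z n r hr, Z ((p : ℤ) * n) r hr, Int.zero_ediv]
          by_cases hd : (p : ℤ) ∣ r
          · rw [if_pos (⟨hd, dvd_zero _⟩ : (p : ℤ) ∣ r ∧ (p : ℤ) ∣ (0 : ℤ)),
              Z n (r / (p : ℤ)) (hrp hd)]
            by_cases hdn : (p : ℤ) ∣ n
            · rw [if_pos (⟨hdn, hd⟩ : (p : ℤ) ∣ n ∧ (p : ℤ) ∣ r),
                Z (n / (p : ℤ)) (r / (p : ℤ)) (hrp hd)]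
            · rw [if_neg (fun hc : (p : ℤ) ∣ n ∧ (p : ℤ) ∣ r => hdn hc.1)]
          · rw [if_neg (fun hc : (p : ℤ) ∣ r ∧ (p : ℤ) ∣ (0 : ℤ) => hd hc.1),
              if_neg (fun hc : (p : ℤ) ∣ n ∧ (p : ℤ) ∣ r => hd hc.2)]
        · obtain ⟨ν, n₀, hn₀, rfl⟩ := int_fact p hp n hn
          obtain ⟨ρ, r₀, hr₀, rfl⟩ := int_fact p hp r hr
          obtain ⟨μ, m₀, hm₀, rfl⟩ := int_fact p hp m hm
          have F1 : ∀ i j l : ℕ, a ((p : ℤ) ^ i * n₀) ((p : ℤ) ^ j * r₀) ((p : ℤ) ^ l * m₀)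
              = ∑ δ ∈ Finset.range (min i (min j l) + 1),
                  (p : ℂ) ^ ((δ : ℤ) * (k - 1)) *
                    a ((p : ℤ) ^ (i + l - 2 * δ) * n₀) ((p : ℤ) ^ (j - δ) * r₀) m₀ :=
            fun i j l => (h i j l n₀ r₀ m₀ hn₀ hr₀ hm₀).1
          rw [show (p : ℤ) * ((p : ℤ) ^ μ * m₀) = (p : ℤ) ^ (μ + 1) * m₀ by ring,
            show (p : ℤ) * ((p : ℤ) ^ ν * n₀) = (p : ℤ) ^ (ν + 1) * n₀ by ring,
            brackL p hp a ((p : ℤ) ^ ν * n₀) hr₀ hm₀ ρ μ,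
            brackR p hp a ((p : ℤ) ^ μ * m₀) hn₀ hr₀ ν ρ,
            F1 ν ρ (μ + 1), F1 ν (ρ - 1) (μ - 1), F1 (ν + 1) ρ μ, F1 (ν - 1) (ρ - 1) μ]
          simp only [qpow k p]
          exact keyK ((p : ℂ) ^ (k - 1))
            (fun e f => a ((p : ℤ) ^ e * n₀) ((p : ℤ) ^ f * r₀) m₀) ν ρ μ
end

section
/- Let N ≥ 1 be an integer and p a prime. Let A := (1/√p)·diag(p,p,1,1) and, for u = 0,…,p−1, let B_u := (1/√p)·[[1,0,u,0],[0,p,0,0],[0,0,p,0],[0,0,0,1]]. Then the double coset Σ_N^J · A · Σ_N^J is the disjoint union of the p+1 right cosets Σ_N^J·A and Σ_N^J·B_u (u = 0,…,p−1). -/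
open scoped Classical
open Complex Matrix Finset

/-- The matrix `A = (1/√p)·diag(p,p,1,1)`. -/
noncomputable def Amat (p : ℕ) : Matrix (Fin 4) (Fin 4) ℝ :=
  (Real.sqrt p)⁻¹ • !![(p : ℝ), 0, 0, 0; 0, (p : ℝ), 0, 0; 0, 0, 1, 0; 0, 0, 0, 1]

/-- The matrix `B_u = (1/√p)·[[1,0,u,0],[0,p,0,0],[0,0,p,0],[0,0,0,1]]`. -/
noncomputable def Bmat (p u : ℕ) : Matrix (Fin 4) (Fin 4) ℝ :=
  (Real.sqrt p)⁻¹ •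
    !![1, 0, (u : ℝ), 0; 0, (p : ℝ), 0, 0; 0, 0, (p : ℝ), 0; 0, 0, 0, 1]

namespace DCaux

lemma zint_add {a b : ℝ} (ha : ZIntegral a) (hb : ZIntegral b) : ZIntegral (a + b) := by
  obtain ⟨m, rfl⟩ := ha; obtain ⟨n, rfl⟩ := hb; exact ⟨m + n, by push_cast; ring⟩

lemma zint_mul {a b : ℝ} (ha : ZIntegral a) (hb : ZIntegral b) : ZIntegral (a * b) := by
  obtain ⟨m, rfl⟩ := ha; obtain ⟨n, rfl⟩ := hb; exact ⟨m * n, by push_cast; ring⟩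

lemma zint_zero : ZIntegral (0 : ℝ) := ⟨0, by norm_num⟩
lemma zint_one : ZIntegral (1 : ℝ) := ⟨1, by norm_num⟩
lemma zint_pm {x : ℝ} (h : x = 1 ∨ x = -1) : ZIntegral x := by
  rcases h with h | h
  · exact ⟨1, by rw [h]; norm_num⟩
  · exact ⟨-1, by rw [h]; norm_num⟩

lemma symp_mul {M P : Matrix (Fin 4) (Fin 4) ℝ} (hM : IsSymplectic M) (hP : IsSymplectic P) :
    IsSymplectic (M * P) := by
  unfold IsSymplectic at *
  rw [Matrix.transpose_mul]
  calc Pᵀ * Mᵀ * J4 * (M * P) = Pᵀ * (Mᵀ * J4 * M) * P := by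
        simp only [Matrix.mul_assoc]
      _ = J4 := by rw [hM]; exact hP

/-- The symplectic relation used everywhere: from row-3 vanishing. -/
lemma symp_rel {N : ℤ} {g : Matrix (Fin 4) (Fin 4) ℝ} (hg : g ∈ JacobiGroup N) :
    g 2 0 * g 0 2 - g 0 0 * g 2 2 = -1 := by
  obtain ⟨⟨hsymp, -⟩, -, -, -, -, -, h30, h32⟩ := hg
  have h := hsymp
  have h02 : (gᵀ * J4 * g) 0 2 = J4 0 2 := by rw [h]
  simp [Matrix.mul_apply, Fin.sum_univ_four, J4, Matrix.transpose_apply,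
    Matrix.vecHead, Matrix.vecTail, Function.comp, h30, h32] at h02
  linarith [h02]


noncomputable def Ainv (p : ℕ) : Matrix (Fin 4) (Fin 4) ℝ :=
  (Real.sqrt p)⁻¹ • !![1, 0, 0, 0; 0, 1, 0, 0; 0, 0, (p:ℝ), 0; 0, 0, 0, (p:ℝ)]

noncomputable def Binv (p u : ℕ) : Matrix (Fin 4) (Fin 4) ℝ :=
  (Real.sqrt p)⁻¹ • !![(p:ℝ), 0, -(u:ℝ), 0; 0, 1, 0, 0; 0, 0, 1, 0; 0, 0, 0, (p:ℝ)]

section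
variable {p u : ℕ} (hp : p.Prime)
include hp

lemma hs0 : Real.sqrt p ≠ 0 := by
  have : (0:ℝ) < p := by exact_mod_cast hp.pos
  positivity

lemma hs : Real.sqrt p * Real.sqrt p = p := by
  have : (0:ℝ) ≤ p := by positivity
  exact Real.mul_self_sqrt this

lemma symp_A : IsSymplectic (Amat p) := by
  have hs := hs hp; have hs0 := hs0 hp
  have hT : (Amat p)ᵀ = Amat p := by
    ext i j
    fin_cases i <;> fin_cases j <;>
      simp [Amat, Matrix.vecHead, Matrix.vecTail, Function.comp]
  unfold IsSymplectic
  rw [hT]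
  ext i j
  fin_cases i <;> fin_cases j <;>
    simp [Amat, J4, Matrix.mul_apply, Fin.sum_univ_four, Matrix.smul_apply, smul_eq_mul,
      Matrix.vecHead, Matrix.vecTail, Function.comp] <;>
    field_simp <;> (first | ring | linear_combination hs | linear_combination -hs) <;> linarith [hs]

lemma symp_Ainv : IsSymplectic (Ainv p) := by
  have hs := hs hp; have hs0 := hs0 hp
  have hT : (Ainv p)ᵀ = Ainv p := by
    ext i j
    fin_cases i <;> fin_cases j <;>
      simp [Ainv, Matrix.vecHead, Matrix.vecTail, Function.comp]
  unfold IsSymplectic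
  rw [hT]
  ext i j
  fin_cases i <;> fin_cases j <;>
    simp [Ainv, J4, Matrix.mul_apply, Fin.sum_univ_four, Matrix.smul_apply, smul_eq_mul,
      Matrix.vecHead, Matrix.vecTail, Function.comp] <;>
    field_simp <;> (first | ring | linear_combination hs | linear_combination -hs) <;> linarith [hs]

lemma symp_B : IsSymplectic (Bmat p u) := by
  have hs := hs hp; have hs0 := hs0 hp
  have hT : (Bmat p u)ᵀ = (Real.sqrt p)⁻¹ •
      !![1, 0, 0, 0; 0, (p:ℝ), 0, 0; (u:ℝ), 0, (p:ℝ), 0; 0, 0, 0, 1] := by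
    ext i j
    fin_cases i <;> fin_cases j <;>
      simp [Bmat, Matrix.vecHead, Matrix.vecTail, Function.comp]
  unfold IsSymplectic
  rw [hT]
  ext i j
  fin_cases i <;> fin_cases j <;>
    simp [Bmat, J4, Matrix.mul_apply, Fin.sum_univ_four, Matrix.smul_apply, smul_eq_mul,
      Matrix.vecHead, Matrix.vecTail, Function.comp] <;>
    field_simp <;> (first | ring | linear_combination hs | linear_combination -hs |
      linear_combination (u:ℝ) * hs | linear_combination -(u:ℝ) * hs) <;> linarith [hs]

lemma symp_Binv : IsSymplectic (Binv p u) := by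
  have hs := hs hp; have hs0 := hs0 hp
  have hT : (Binv p u)ᵀ = (Real.sqrt p)⁻¹ •
      !![(p:ℝ), 0, 0, 0; 0, 1, 0, 0; -(u:ℝ), 0, 1, 0; 0, 0, 0, (p:ℝ)] := by
    ext i j
    fin_cases i <;> fin_cases j <;>
      simp [Binv, Matrix.vecHead, Matrix.vecTail, Function.comp]
  unfold IsSymplectic
  rw [hT]
  ext i j
  fin_cases i <;> fin_cases j <;>
    simp [Binv, J4, Matrix.mul_apply, Fin.sum_univ_four, Matrix.smul_apply, smul_eq_mul,
      Matrix.vecHead, Matrix.vecTail, Function.comp] <;>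
    field_simp <;> (first | ring | linear_combination hs | linear_combination -hs |
      linear_combination (u:ℝ) * hs | linear_combination -(u:ℝ) * hs) <;> linarith [hs]

lemma Ainv_mul_A : Ainv p * Amat p = 1 := by
  have hs := hs hp; have hs0 := hs0 hp
  ext i j
  fin_cases i <;> fin_cases j <;>
    simp [Ainv, Amat, Matrix.mul_apply, Fin.sum_univ_four, Matrix.smul_apply, smul_eq_mul,
      Matrix.vecHead, Matrix.vecTail, Function.comp, Matrix.one_apply] <;>
    field_simp <;> linarith [hs]

lemma Binv_mul_B : Binv p u * Bmat p u = 1 := by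
  have hs := hs hp; have hs0 := hs0 hp
  ext i j
  fin_cases i <;> fin_cases j <;>
    simp [Binv, Bmat, Matrix.mul_apply, Fin.sum_univ_four, Matrix.smul_apply, smul_eq_mul,
      Matrix.vecHead, Matrix.vecTail, Function.comp, Matrix.one_apply] <;>
    field_simp <;> ring <;> linarith [hs]

end
section
variable {p u : ℕ}

lemma AgAinv_eq (hp : p.Prime) {N : ℤ} {g : Matrix (Fin 4) (Fin 4) ℝ} (hg : g ∈ JacobiGroup N)
    (k : ℝ) (hk : g 2 0 = p * k) :
    Amat p * g * Ainv p = !![g 0 0, 0, p * g 0 2, p * g 0 3;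
                             g 1 0, g 1 1, p * g 1 2, p * g 1 3;
                             k, 0, g 2 2, g 2 3;
                             0, 0, 0, g 3 3] := by
  have hs := hs hp; have hs0 := hs0 hp
  have hs2 : Real.sqrt p ^ 2 = (p:ℝ) := by rw [sq]; exact hs
  have hp0 : (p:ℝ) ≠ 0 := Nat.cast_ne_zero.2 hp.ne_zero
  obtain ⟨-, -, g01, g21, g31, -, g30, g32⟩ := hg
  ext i j
  fin_cases i <;> fin_cases j <;>
    simp [Amat, Ainv, Matrix.mul_apply, Fin.sum_univ_four, Matrix.smul_apply, smul_eq_mul,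
      Matrix.vecHead, Matrix.vecTail, Function.comp, Matrix.vecMul, dotProduct, g01, g21, g31, g30, g32, hk] <;>
    field_simp <;> ring_nf <;> simp [hs2] <;> ring_nf

lemma AgBinv_eq (hp : p.Prime) {N : ℤ} {g : Matrix (Fin 4) (Fin 4) ℝ} (hg : g ∈ JacobiGroup N)
    (k : ℝ) (hk : g 2 2 - u * g 2 0 = p * k) :
    Amat p * g * Binv p u =
      !![p * g 0 0, 0, g 0 2 - u * g 0 0, p * g 0 3;
         p * g 1 0, g 1 1, g 1 2 - u * g 1 0, p * g 1 3;
         g 2 0, 0, k, g 2 3;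
         0, 0, 0, g 3 3] := by
  have hs := hs hp; have hs0 := hs0 hp
  have hs2 : Real.sqrt p ^ 2 = (p:ℝ) := by rw [sq]; exact hs
  have hp0 : (p:ℝ) ≠ 0 := Nat.cast_ne_zero.2 hp.ne_zero
  have hk' : g 2 2 = p * k + u * g 2 0 := by linarith
  obtain ⟨-, -, g01, g21, g31, -, g30, g32⟩ := hg
  ext i j
  fin_cases i <;> fin_cases j <;>
    simp [Amat, Binv, Matrix.mul_apply, Fin.sum_univ_four, Matrix.smul_apply, smul_eq_mul,
      Matrix.vecHead, Matrix.vecTail, Function.comp, Matrix.vecMul, dotProduct,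
      g01, g21, g31, g30, g32, hk'] <;>
    field_simp <;> ring_nf <;> simp [hs2] <;> ring_nf

/-- `ι(S)` : the embedded `S = [[0,-1],[1,0]]`. -/
def emb (a b c d : ℤ) : Matrix (Fin 4) (Fin 4) ℝ :=
  !![(a:ℝ), 0, (b:ℝ), 0; 0, 1, 0, 0; (c:ℝ), 0, (d:ℝ), 0; 0, 0, 0, 1]

lemma emb_mem {N : ℤ} (a b c d : ℤ) (h : a * d - b * c = 1) : emb a b c d ∈ JacobiGroup N := by
  have hR : (a:ℝ) * d - b * c = 1 := by exact_mod_cast h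
  refine ⟨⟨?_, ?_, ⟨0, by simp [emb, Matrix.vecHead, Matrix.vecTail, Function.comp]⟩, ⟨0, by simp [emb, Matrix.vecHead, Matrix.vecTail, Function.comp]⟩, ⟨0, by simp [emb, Matrix.vecHead, Matrix.vecTail, Function.comp]⟩,
      ⟨0, by simp [emb, Matrix.vecHead, Matrix.vecTail, Function.comp]⟩, ⟨0, by simp [emb, Matrix.vecHead, Matrix.vecTail, Function.comp]⟩, ⟨0, by simp [emb, Matrix.vecHead, Matrix.vecTail, Function.comp]⟩⟩,
      Or.inl (by simp [emb, Matrix.vecHead, Matrix.vecTail, Function.comp]), by simp [emb, Matrix.vecHead, Matrix.vecTail, Function.comp], by simp [emb, Matrix.vecHead, Matrix.vecTail, Function.comp], by simp [emb, Matrix.vecHead, Matrix.vecTail, Function.comp],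
      Or.inl (by simp [emb, Matrix.vecHead, Matrix.vecTail, Function.comp]), by simp [emb, Matrix.vecHead, Matrix.vecTail, Function.comp], by simp [emb, Matrix.vecHead, Matrix.vecTail, Function.comp]⟩
  · have hT2 : (emb a b c d)ᵀ =
        !![(a:ℝ), 0, (c:ℝ), 0; 0, 1, 0, 0; (b:ℝ), 0, (d:ℝ), 0; 0, 0, 0, 1] := by
      ext i j
      fin_cases i <;> fin_cases j <;>
        simp [emb, Matrix.vecHead, Matrix.vecTail, Function.comp]
    unfold IsSymplectic
    rw [hT2]
    ext i j
    fin_cases i <;> fin_cases j <;>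
      simp [emb, J4, Matrix.mul_apply, Fin.sum_univ_four,
        Matrix.vecHead, Matrix.vecTail, Function.comp, Matrix.vecMul, dotProduct] <;>
      ring_nf <;>
      first
        | rfl
        | linear_combination hR
        | linear_combination -hR
        | linear_combination (2:ℝ) * hR
        | linear_combination (-2:ℝ) * hR
  · intro i j _
    fin_cases i <;> fin_cases j <;>
      simp only [emb, Matrix.cons_val', Matrix.cons_val_zero, Matrix.cons_val_one,
        Matrix.head_cons, Matrix.empty_val', Matrix.cons_val_fin_one, Matrix.head_fin_const,
        Matrix.vecHead, Matrix.vecTail, Function.comp] <;>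
      first
        | exact zint_zero
        | exact zint_one
        | exact ⟨a, rfl⟩
        | exact ⟨b, rfl⟩
        | exact ⟨c, rfl⟩
        | exact ⟨d, rfl⟩

lemma one_mem {N : ℤ} : (1 : Matrix (Fin 4) (Fin 4) ℝ) ∈ JacobiGroup N := by
  have : (1 : Matrix (Fin 4) (Fin 4) ℝ) = emb 1 0 0 1 := by
    ext i j
    fin_cases i <;> fin_cases j <;>
      simp [emb, Matrix.one_apply, Matrix.vecHead, Matrix.vecTail, Function.comp]
  rw [this]; exact emb_mem 1 0 0 1 (by norm_num)

lemma B_decomp (hp : p.Prime) (u : ℕ) :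
    emb 0 (-1) 1 0 * Amat p * emb 0 1 (-1) (-(u:ℤ)) = Bmat p u := by
  have hs := hs hp; have hs0 := hs0 hp
  ext i j
  fin_cases i <;> fin_cases j <;>
    simp [emb, Amat, Bmat, Matrix.mul_apply, Fin.sum_univ_four, Matrix.smul_apply, smul_eq_mul,
      Matrix.vecHead, Matrix.vecTail, Function.comp, Matrix.vecMul, dotProduct] <;>
    ring_nf <;> simp

lemma jacobi_mul {N : ℤ} (hN : 1 ≤ N) {g h : Matrix (Fin 4) (Fin 4) ℝ}
    (hg : g ∈ JacobiGroup N) (hh : h ∈ JacobiGroup N) : g * h ∈ JacobiGroup N := by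
  have hN0 : (N:ℝ) ≠ 0 := by
    have : N ≠ 0 := by omega
    exact_mod_cast this
  obtain ⟨⟨gsymp, gint, ⟨gq, hgq⟩, -, -, -, -, -⟩, g11, g01, g21, g31, g33, g30, g32⟩ := hg
  obtain ⟨⟨hsymp, hint, ⟨hq, hhq⟩, -, -, -, -, -⟩, h11, h01, h21, h31, h33, h30, h32⟩ := hh
  have mul_app : ∀ i j, (g * h) i j
      = g i 0 * h 0 j + g i 1 * h 1 j + g i 2 * h 2 j + g i 3 * h 3 j := by
    intro i j; rw [Matrix.mul_apply, Fin.sum_univ_four]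
  refine ⟨⟨symp_mul gsymp hsymp, ?_, ?_, ?_, ?_, ?_, ?_, ?_⟩, ?_, ?_, ?_, ?_, ?_, ?_, ?_⟩
  · -- integrality
    intro i j hij
    rw [mul_app]
    by_cases hj : j = 3
    · subst hj
      have hi : i ≠ 1 := by rintro rfl; exact hij rfl
      have gi1 : g i 1 = 0 := by
        fin_cases i
        · exact g01
        · exact absurd rfl hi
        · exact g21
        · exact g31
      rw [gi1, zero_mul]
      refine zint_add (zint_add (zint_add ?_ zint_zero) ?_) ?_
      · exact zint_mul (gint i 0 (by simp)) (hint 0 3 (by decide))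
      · exact zint_mul (gint i 2 (by simp)) (hint 2 3 (by decide))
      · refine zint_mul (gint i 3 ?_) (zint_pm h33)
        simp only [ne_eq, Prod.mk.injEq, not_and]
        intro h1; exact absurd h1 hi
    · have h3j : h 3 j = 0 := by
        fin_cases j
        · exact h30
        · exact h31
        · exact h32
        · exact absurd rfl hj
      rw [h3j, mul_zero]
      have hjne : ∀ k : Fin 4, ((k, j) : Fin 4 × Fin 4) ≠ (1, 3) := by
        intro k
        simp only [ne_eq, Prod.mk.injEq, not_and]
        intro _; exact hj
      have hine : ∀ k : Fin 4, k ≠ 3 → ((i, k) : Fin 4 × Fin 4) ≠ (1, 3) := by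
        intro k hk
        simp only [ne_eq, Prod.mk.injEq, not_and]
        intro _; exact hk
      refine zint_add (zint_add (zint_add ?_ ?_) ?_) zint_zero
      · exact zint_mul (gint i 0 (hine 0 (by decide))) (hint 0 j (hjne 0))
      · exact zint_mul (gint i 1 (hine 1 (by decide))) (hint 1 j (hjne 1))
      · exact zint_mul (gint i 2 (hine 2 (by decide))) (hint 2 j (hjne 2))
  · -- (1,3) entry
    obtain ⟨a, ha⟩ := gint 1 0 (by decide)
    obtain ⟨b, hb⟩ := hint 0 3 (by decide)
    obtain ⟨c, hc⟩ := gint 1 2 (by decide)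
    obtain ⟨d, hd⟩ := hint 2 3 (by decide)
    rcases g11 with e | e <;> rcases h33 with f | f
    · exact ⟨N * (a * b + c * d) + hq + gq, by
        rw [mul_app, ha, hb, hc, hd, hgq, hhq, e, f]; push_cast; field_simp; ring⟩
    · exact ⟨N * (a * b + c * d) + hq - gq, by
        rw [mul_app, ha, hb, hc, hd, hgq, hhq, e, f]; push_cast; field_simp; ring⟩
    · exact ⟨N * (a * b + c * d) - hq + gq, by
        rw [mul_app, ha, hb, hc, hd, hgq, hhq, e, f]; push_cast; field_simp; ring⟩
    · exact ⟨N * (a * b + c * d) - hq - gq, by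
        rw [mul_app, ha, hb, hc, hd, hgq, hhq, e, f]; push_cast; field_simp; ring⟩
  · exact ⟨0, by rw [mul_app, g01, h01, h21, h31]; push_cast; ring⟩
  · exact ⟨0, by rw [mul_app, g21, h01, h21, h31]; push_cast; ring⟩
  · exact ⟨0, by rw [mul_app, g30, g31, g32, h30]; push_cast; ring⟩
  · exact ⟨0, by rw [mul_app, g30, g31, g32, h31]; push_cast; ring⟩
  · exact ⟨0, by rw [mul_app, g30, g31, g32, h32]; push_cast; ring⟩
  · rw [mul_app, h01, h21, h31]
    rcases g11 with e | e <;> rcases h11 with f | f <;> rw [e, f] <;> norm_num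
  · rw [mul_app, g01, h01, h21, h31]; ring
  · rw [mul_app, g21, h01, h21, h31]; ring
  · rw [mul_app, g31, h01, h21, h31]; ring
  · rw [mul_app, g30, g31, g32]
    rcases g33 with e | e <;> rcases h33 with f | f <;> rw [e, f] <;> norm_num
  · rw [mul_app, g30, g31, g32, h30]; ring
  · rw [mul_app, g30, g31, g32, h32]; ring

lemma zint_sub {a b : ℝ} (ha : ZIntegral a) (hb : ZIntegral b) : ZIntegral (a - b) := by
  obtain ⟨m, rfl⟩ := ha; obtain ⟨n, rfl⟩ := hb; exact ⟨m - n, by push_cast; ring⟩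

lemma zint_p : ZIntegral ((p:ℕ):ℝ) := ⟨(p:ℤ), by push_cast; rfl⟩
lemma zint_u (u : ℕ) : ZIntegral ((u:ℕ):ℝ) := ⟨(u:ℤ), by push_cast; rfl⟩

lemma caseA_mem (hp : p.Prime) {N : ℤ} (hN : 1 ≤ N) {g : Matrix (Fin 4) (Fin 4) ℝ}
    (hg : g ∈ JacobiGroup N) (e : ℤ) (hk : g 2 0 = (p:ℝ) * (e:ℝ)) :
    Amat p * g * Ainv p ∈ JacobiGroup N := by
  have hN0 : (N:ℝ) ≠ 0 := by
    have : N ≠ 0 := by omega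
    exact_mod_cast this
  have heq := AgAinv_eq hp hg (e:ℝ) hk
  have hsymp : IsSymplectic (Amat p * g * Ainv p) :=
    symp_mul (symp_mul (symp_A hp) hg.1.1) (symp_Ainv hp)
  rw [heq] at hsymp ⊢
  obtain ⟨⟨-, gint, ⟨gq, hgq⟩, -, -, -, -, -⟩, g11, g01, g21, g31, g33, g30, g32⟩ := hg
  refine ⟨⟨hsymp, ?_, ⟨p * gq, ?_⟩, ⟨0, by simp [Matrix.vecHead, Matrix.vecTail, Function.comp]⟩, ⟨0, by simp [Matrix.vecHead, Matrix.vecTail, Function.comp]⟩, ⟨0, by simp [Matrix.vecHead, Matrix.vecTail, Function.comp]⟩,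
      ⟨0, by simp [Matrix.vecHead, Matrix.vecTail, Function.comp]⟩, ⟨0, by simp [Matrix.vecHead, Matrix.vecTail, Function.comp]⟩⟩, by simpa [Matrix.vecHead, Matrix.vecTail, Function.comp] using g11, by simp [Matrix.vecHead, Matrix.vecTail, Function.comp], by simp [Matrix.vecHead, Matrix.vecTail, Function.comp], by simp [Matrix.vecHead, Matrix.vecTail, Function.comp],
      by simpa [Matrix.vecHead, Matrix.vecTail, Function.comp] using g33, by simp [Matrix.vecHead, Matrix.vecTail, Function.comp], by simp [Matrix.vecHead, Matrix.vecTail, Function.comp]⟩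
  · intro i j hij
    fin_cases i <;> fin_cases j <;>
      simp [Matrix.vecHead, Matrix.vecTail, Function.comp] <;>
      first
        | exact zint_zero
        | exact zint_pm g11
        | exact zint_pm g33
        | exact ⟨e, rfl⟩
        | exact gint 0 0 (by decide)
        | exact gint 1 0 (by decide)
        | exact gint 2 2 (by decide)
        | exact gint 2 3 (by decide)
        | exact zint_mul zint_p (gint 0 2 (by decide))
        | exact zint_mul zint_p (gint 0 3 (by decide))
        | exact zint_mul zint_p (gint 1 2 (by decide))
        | simp at hij
  · show (p:ℝ) * g 1 3 = _
    rw [hgq]; push_cast; field_simp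

lemma caseB_mem (hp : p.Prime) {N : ℤ} (hN : 1 ≤ N) {g : Matrix (Fin 4) (Fin 4) ℝ}
    (hg : g ∈ JacobiGroup N) (u : ℕ) (e : ℤ)
    (hk : g 2 2 - (u:ℝ) * g 2 0 = (p:ℝ) * (e:ℝ)) :
    Amat p * g * Binv p u ∈ JacobiGroup N := by
  have hN0 : (N:ℝ) ≠ 0 := by
    have : N ≠ 0 := by omega
    exact_mod_cast this
  have heq := AgBinv_eq hp hg (e:ℝ) hk
  have hsymp : IsSymplectic (Amat p * g * Binv p u) :=
    symp_mul (symp_mul (symp_A hp) hg.1.1) (symp_Binv hp)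
  rw [heq] at hsymp ⊢
  obtain ⟨⟨-, gint, ⟨gq, hgq⟩, -, -, -, -, -⟩, g11, g01, g21, g31, g33, g30, g32⟩ := hg
  refine ⟨⟨hsymp, ?_, ⟨p * gq, ?_⟩, ⟨0, by simp [Matrix.vecHead, Matrix.vecTail, Function.comp]⟩, ⟨0, by simp [Matrix.vecHead, Matrix.vecTail, Function.comp]⟩, ⟨0, by simp [Matrix.vecHead, Matrix.vecTail, Function.comp]⟩,
      ⟨0, by simp [Matrix.vecHead, Matrix.vecTail, Function.comp]⟩, ⟨0, by simp [Matrix.vecHead, Matrix.vecTail, Function.comp]⟩⟩, by simpa [Matrix.vecHead, Matrix.vecTail, Function.comp] using g11, by simp [Matrix.vecHead, Matrix.vecTail, Function.comp], by simp [Matrix.vecHead, Matrix.vecTail, Function.comp], by simp [Matrix.vecHead, Matrix.vecTail, Function.comp],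
      by simpa [Matrix.vecHead, Matrix.vecTail, Function.comp] using g33, by simp [Matrix.vecHead, Matrix.vecTail, Function.comp], by simp [Matrix.vecHead, Matrix.vecTail, Function.comp]⟩
  · intro i j hij
    fin_cases i <;> fin_cases j <;>
      simp [Matrix.vecHead, Matrix.vecTail, Function.comp] <;>
      first
        | exact zint_zero
        | exact zint_pm g11
        | exact zint_pm g33
        | exact ⟨e, rfl⟩
        | exact gint 2 0 (by decide)
        | exact gint 2 3 (by decide)
        | exact zint_mul zint_p (gint 0 0 (by decide))
        | exact zint_mul zint_p (gint 0 3 (by decide))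
        | exact zint_mul zint_p (gint 1 0 (by decide))
        | exact zint_sub (gint 0 2 (by decide)) (zint_mul (zint_u u) (gint 0 0 (by decide)))
        | exact zint_sub (gint 1 2 (by decide)) (zint_mul (zint_u u) (gint 1 0 (by decide)))
        | simp at hij
  · show (p:ℝ) * g 1 3 = _
    rw [hgq]; push_cast; field_simp

lemma entry_eqs_AB (hp : p.Prime) {g g' : Matrix (Fin 4) (Fin 4) ℝ}
    (heq : g * Amat p = g' * Bmat p u) (i : Fin 4) :
    (p:ℝ) * g i 0 = g' i 0 ∧ g i 2 = u * g' i 0 + p * g' i 2 := by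
  have hs := hs hp; have hs0 := hs0 hp
  have hp0 : (p:ℝ) ≠ 0 := Nat.cast_ne_zero.2 hp.ne_zero
  have h0 := congrFun (congrFun heq i) 0
  have h2 := congrFun (congrFun heq i) 2
  simp [Amat, Bmat, Matrix.mul_apply, Fin.sum_univ_four, Matrix.smul_apply, smul_eq_mul,
    Matrix.vecHead, Matrix.vecTail, Function.comp] at h0 h2
  constructor
  · field_simp at h0
    linear_combination h0
  · field_simp at h2
    linear_combination h2

lemma entry_eqs_BB (hp : p.Prime) {u v : ℕ} {g g' : Matrix (Fin 4) (Fin 4) ℝ}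
    (heq : g * Bmat p u = g' * Bmat p v) (i : Fin 4) :
    g i 0 = g' i 0 ∧ (u:ℝ) * g i 0 + p * g i 2 = v * g' i 0 + p * g' i 2 := by
  have hs := hs hp; have hs0 := hs0 hp
  have hp0 : (p:ℝ) ≠ 0 := Nat.cast_ne_zero.2 hp.ne_zero
  have h0 := congrFun (congrFun heq i) 0
  have h2 := congrFun (congrFun heq i) 2
  simp [Bmat, Matrix.mul_apply, Fin.sum_univ_four, Matrix.smul_apply, smul_eq_mul,
    Matrix.vecHead, Matrix.vecTail, Function.comp] at h0 h2
  constructor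
  · rcases h0 with h0 | h0
    · exact h0
    · exact absurd h0 hp.ne_zero
  · field_simp at h2
    linear_combination h2

lemma contra (hp : p.Prime) {a b c d : ℤ} (hrel : a * b - c * d = -1)
    (h1 : (p:ℤ) ∣ b) (h2 : (p:ℤ) ∣ d) : False := by
  obtain ⟨x, rfl⟩ := h1; obtain ⟨y, rfl⟩ := h2
  have h1' : (p:ℤ) ∣ 1 := ⟨c * y - a * x, by linear_combination hrel⟩
  have hle := Int.le_of_dvd one_pos h1'
  have h2le : (2:ℤ) ≤ (p:ℤ) := by exact_mod_cast hp.two_le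
  omega

end
end DCaux


/-- The double coset `Σ_N^J · A · Σ_N^J` is the disjoint union of the `p+1` right
cosets `Σ_N^J·A` and `Σ_N^J·B_u`, `u = 0, …, p-1`. -/
theorem doubleCoset_decomposition (N : ℤ) (hN : 1 ≤ N) (p : ℕ) (hp : p.Prime) :
    ({X | ∃ g₁ ∈ JacobiGroup N, ∃ g₂ ∈ JacobiGroup N, X = g₁ * Amat p * g₂}
      = {X | ∃ g ∈ JacobiGroup N, X = g * Amat p} ∪
        ⋃ u ∈ Finset.range p, {X | ∃ g ∈ JacobiGroup N, X = g * Bmat p u}) ∧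
    (∀ u ∈ Finset.range p,
      Disjoint {X | ∃ g ∈ JacobiGroup N, X = g * Amat p}
        {X | ∃ g ∈ JacobiGroup N, X = g * Bmat p u}) ∧
    (∀ u ∈ Finset.range p, ∀ v ∈ Finset.range p, u ≠ v →
      Disjoint {X | ∃ g ∈ JacobiGroup N, X = g * Bmat p u}
        {X | ∃ g ∈ JacobiGroup N, X = g * Bmat p v}) := by
  refine ⟨?_, ?_, ?_⟩
  · ext X
    simp only [Set.mem_setOf_eq, Set.mem_union, Set.mem_iUnion, exists_prop]
    constructor
    · rintro ⟨g₁, hg₁, g₂, hg₂, rfl⟩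
      obtain ⟨m20, hm20⟩ := hg₂.1.2.1 2 0 (by decide)
      obtain ⟨m22, hm22⟩ := hg₂.1.2.1 2 2 (by decide)
      by_cases hdvd : (p:ℤ) ∣ m20
      · left
        obtain ⟨e, he⟩ := hdvd
        refine ⟨g₁ * (Amat p * g₂ * DCaux.Ainv p),
          DCaux.jacobi_mul hN hg₁ (DCaux.caseA_mem hp hN hg₂ e ?_), ?_⟩
        · rw [hm20, he]; push_cast; ring
        · simp only [mul_assoc]
          rw [DCaux.Ainv_mul_A hp, mul_one]
      · right
        haveI : Fact p.Prime := ⟨hp⟩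
        haveI : NeZero p := ⟨hp.ne_zero⟩
        have hm0 : ((m20 : ZMod p)) ≠ 0 := by
          rw [Ne, ZMod.intCast_zmod_eq_zero_iff_dvd]; exact hdvd
        set x : ZMod p := (m22 : ZMod p) * (m20 : ZMod p)⁻¹ with hx
        have hdv : (p:ℤ) ∣ (m22 - (x.val : ℤ) * m20) := by
          rw [← ZMod.intCast_zmod_eq_zero_iff_dvd]
          push_cast
          rw [ZMod.natCast_val, ZMod.cast_id, hx]
          field_simp; simp
        obtain ⟨e, he⟩ := hdv
        have hke : g₂ 2 2 - ((x.val : ℕ) : ℝ) * g₂ 2 0 = (p:ℝ) * (e:ℝ) := by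
          have hc : ((m22 - (x.val : ℤ) * m20 : ℤ) : ℝ) = (((p:ℤ) * e : ℤ) : ℝ) := by
            exact_mod_cast congrArg (fun t : ℤ => (t : ℝ)) he
          push_cast at hc
          rw [hm22, hm20]
          linarith [hc]
        refine ⟨x.val, Finset.mem_range.2 (ZMod.val_lt x),
          g₁ * (Amat p * g₂ * DCaux.Binv p x.val),
          DCaux.jacobi_mul hN hg₁ (DCaux.caseB_mem hp hN hg₂ x.val e hke), ?_⟩
        simp only [mul_assoc]
        rw [DCaux.Binv_mul_B hp, mul_one]
    · rintro (⟨g, hg, rfl⟩ | ⟨u, hu, g, hg, rfl⟩)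
      · exact ⟨g, hg, 1, DCaux.one_mem, (mul_one _).symm⟩
      · refine ⟨g * DCaux.emb 0 (-1) 1 0,
          DCaux.jacobi_mul hN hg (DCaux.emb_mem _ _ _ _ (by norm_num)),
          DCaux.emb 0 1 (-1) (-(u:ℤ)), DCaux.emb_mem _ _ _ _ (by norm_num), ?_⟩
        rw [← DCaux.B_decomp hp u]
        simp only [mul_assoc]
  · intro u hu
    rw [Set.disjoint_left]
    rintro X ⟨g, hg, rfl⟩ ⟨g', hg', heq⟩
    have e0 := DCaux.entry_eqs_AB hp heq 0
    have e2 := DCaux.entry_eqs_AB hp heq 2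
    obtain ⟨a00, ha00⟩ := hg.1.2.1 0 0 (by decide)
    obtain ⟨a02, ha02⟩ := hg.1.2.1 0 2 (by decide)
    obtain ⟨a20, ha20⟩ := hg.1.2.1 2 0 (by decide)
    obtain ⟨a22, ha22⟩ := hg.1.2.1 2 2 (by decide)
    obtain ⟨b02, hb02⟩ := hg'.1.2.1 0 2 (by decide)
    obtain ⟨b22, hb22⟩ := hg'.1.2.1 2 2 (by decide)
    have hz0 : (a02 : ℝ) = (p:ℝ) * ((u:ℝ) * a00 + b02) := by
      rw [← ha02, ← ha00, ← hb02]
      linear_combination e0.2 - (u:ℝ) * e0.1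
    have hz2 : (a22 : ℝ) = (p:ℝ) * ((u:ℝ) * a20 + b22) := by
      rw [← ha22, ← ha20, ← hb22]
      linear_combination e2.2 - (u:ℝ) * e2.1
    have hd0 : (p:ℤ) ∣ a02 := ⟨(u:ℤ) * a00 + b02, by exact_mod_cast hz0⟩
    have hd2 : (p:ℤ) ∣ a22 := ⟨(u:ℤ) * a20 + b22, by exact_mod_cast hz2⟩
    have hrel := DCaux.symp_rel hg
    rw [ha00, ha02, ha20, ha22] at hrel
    have hrelz : a20 * a02 - a00 * a22 = -1 := by exact_mod_cast hrel
    exact DCaux.contra hp hrelz hd0 hd2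
  · intro u hu v hv huv
    rw [Set.disjoint_left]
    rintro X ⟨g, hg, rfl⟩ ⟨g', hg', heq⟩
    have e0 := DCaux.entry_eqs_BB hp heq 0
    have e2 := DCaux.entry_eqs_BB hp heq 2
    obtain ⟨a00, ha00⟩ := hg.1.2.1 0 0 (by decide)
    obtain ⟨a02, ha02⟩ := hg.1.2.1 0 2 (by decide)
    obtain ⟨a20, ha20⟩ := hg.1.2.1 2 0 (by decide)
    obtain ⟨a22, ha22⟩ := hg.1.2.1 2 2 (by decide)
    obtain ⟨b02, hb02⟩ := hg'.1.2.1 0 2 (by decide)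
    obtain ⟨b22, hb22⟩ := hg'.1.2.1 2 2 (by decide)
    have hz0 : ((u:ℝ) - (v:ℝ)) * (a00:ℝ) = (p:ℝ) * ((b02:ℝ) - (a02:ℝ)) := by
      rw [← ha00, ← ha02, ← hb02]
      linear_combination e0.2 - (v:ℝ) * e0.1
    have hz2 : ((u:ℝ) - (v:ℝ)) * (a20:ℝ) = (p:ℝ) * ((b22:ℝ) - (a22:ℝ)) := by
      rw [← ha20, ← ha22, ← hb22]
      linear_combination e2.2 - (v:ℝ) * e2.1
    have hdm0 : (p:ℤ) ∣ ((u:ℤ) - v) * a00 := ⟨b02 - a02, by exact_mod_cast hz0⟩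
    have hdm2 : (p:ℤ) ∣ ((u:ℤ) - v) * a20 := ⟨b22 - a22, by exact_mod_cast hz2⟩
    have hpz : Prime (p:ℤ) := Nat.prime_iff_prime_int.mp hp
    have huvd : ¬ (p:ℤ) ∣ ((u:ℤ) - v) := by
      intro hdd
      have hu' : (u:ℤ) < p := by exact_mod_cast Finset.mem_range.1 hu
      have hv' : (v:ℤ) < p := by exact_mod_cast Finset.mem_range.1 hv
      have habs : |(u:ℤ) - v| < (p:ℤ) := by
        rw [abs_sub_lt_iff]
        constructor <;> omega
      have := Int.eq_zero_of_abs_lt_dvd hdd habs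
      have : (u:ℤ) = v := by omega
      exact huv (by exact_mod_cast this)
    have hd0 : (p:ℤ) ∣ a00 := ((hpz.dvd_mul.mp hdm0).resolve_left huvd)
    have hd2 : (p:ℤ) ∣ a20 := ((hpz.dvd_mul.mp hdm2).resolve_left huvd)
    have hrel := DCaux.symp_rel hg
    rw [ha00, ha02, ha20, ha22] at hrel
    have hrelz : a20 * a02 - a00 * a22 = -1 := by exact_mod_cast hrel
    have hrelz' : a02 * a20 - a22 * a00 = -1 := by linear_combination hrelz
    exact DCaux.contra hp hrelz' hd2 hd0
end

section
/- Let N ≥ 1 and k be integers and α : ℤ³ → ℂ a function with α(n,r,m) = 0 unless n ≥ 0, m ≥ 0 and 4nmN − r² ≥ 0. Then the following are equivalent. (a): for every prime p and all n,r,m ∈ ℤ, α(n,r,pm) + p^{k−1}·[p∣r and p∣m]·α(n,r/p,m/p) = α(pn,r,m) + p^{k−1}·[p∣n and p∣r]·α(n/p,r/p,m) (terms with failing bracketed divisibility conditions are 0). (b): for all (n,r,m) with m ≥ 1 one has α(n,r,m) = Σ_{δ ∣ gcd(n,r,m), δ ≥ 1} δ^{k−1} α(nm/δ², r/δ, 1),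 and for all n ≥ 1 one has α(n,0,0) = σ_{k−1}(n)·α(1,0,0). -/
open scoped Classical
open Complex Matrix Finset

section CorollaryAux

variable {p : ℕ}

lemma dvd_gcd3_iff (v : ℕ) (n r m : ℤ) :
    v ∣ gcd3 n r m ↔ (v:ℤ) ∣ n ∧ (v:ℤ) ∣ r ∧ (v:ℤ) ∣ m := by
  unfold gcd3
  rw [← Int.natCast_dvd_natCast]
  constructor
  · intro h
    have hnr : (v:ℤ) ∣ (Int.gcd n r : ℤ) := h.trans (Int.gcd_dvd_left _ _)
    exact ⟨hnr.trans (Int.gcd_dvd_left _ _), hnr.trans (Int.gcd_dvd_right _ _), h.trans (Int.gcd_dvd_right _ _)⟩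
  · rintro ⟨h1, h2, h3⟩
    exact Int.dvd_coe_gcd (Int.dvd_coe_gcd h1 h2) h3

lemma gcd3_eq_zero_iff (n r m : ℤ) : gcd3 n r m = 0 ↔ n = 0 ∧ r = 0 ∧ m = 0 := by
  simp [gcd3, Int.gcd_eq_zero_iff, and_assoc]

lemma gcd3_comm (n r m : ℤ) : gcd3 n r m = gcd3 m r n := by
  apply Nat.dvd_antisymm
  · have h := (dvd_gcd3_iff (gcd3 n r m) n r m).mp dvd_rfl
    exact (dvd_gcd3_iff _ m r n).mpr ⟨h.2.2, h.2.1, h.1⟩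
  · have h := (dvd_gcd3_iff (gcd3 m r n) m r n).mp dvd_rfl
    exact (dvd_gcd3_iff _ n r m).mpr ⟨h.2.2, h.2.1, h.1⟩

lemma gcd3_zero_zero (n : ℤ) : gcd3 n 0 0 = n.natAbs := by
  simp [gcd3, Int.natAbs_abs]


lemma filter_not_p (hp : p.Prime) (x y z : ℤ) :
    (gcd3 x y ((p:ℤ)*z)).divisors.filter (fun v => ¬ p ∣ v)
      = (gcd3 x y z).divisors.filter (fun v => ¬ p ∣ v) := by
  have hp0 : (p:ℤ) ≠ 0 := by exact_mod_cast hp.ne_zero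
  ext v
  simp only [Finset.mem_filter, Nat.mem_divisors, dvd_gcd3_iff, Ne, gcd3_eq_zero_iff]
  constructor
  · rintro ⟨⟨⟨h1, h2, h3⟩, hne⟩, hnd⟩
    have hcop : IsCoprime (v:ℤ) (p:ℤ) :=
      Nat.isCoprime_iff_coprime.mpr (((Nat.Prime.coprime_iff_not_dvd hp).mpr hnd).symm)
    refine ⟨⟨⟨h1, h2, hcop.dvd_of_dvd_mul_left h3⟩, ?_⟩, hnd⟩
    rintro ⟨hx, hy, hz⟩
    exact hne ⟨hx, hy, by rw [hz, mul_zero]⟩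
  · rintro ⟨⟨⟨h1, h2, h3⟩, hne⟩, hnd⟩
    refine ⟨⟨⟨h1, h2, h3.mul_left _⟩, ?_⟩, hnd⟩
    rintro ⟨hx, hy, hz⟩
    rcases mul_eq_zero.mp hz with h | h
    · exact hp0 h
    · exact hne ⟨hx, hy, h⟩

lemma filter_p (hp : p.Prime) (x y z : ℤ) :
    (gcd3 x y ((p:ℤ)*z)).divisors.filter (fun v => p ∣ v)
      = if (p:ℤ) ∣ x ∧ (p:ℤ) ∣ y then
          (gcd3 (x/(p:ℤ)) (y/(p:ℤ)) z).divisors.image (fun u => p * u)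
        else ∅ := by
  have hp0 : (p:ℤ) ≠ 0 := by exact_mod_cast hp.ne_zero
  split_ifs with hxy
  · obtain ⟨⟨x', rfl⟩, ⟨y', rfl⟩⟩ := hxy
    rw [Int.mul_ediv_cancel_left x' hp0, Int.mul_ediv_cancel_left y' hp0]
    ext v
    simp only [Finset.mem_filter, Nat.mem_divisors, Finset.mem_image, dvd_gcd3_iff, Ne,
      gcd3_eq_zero_iff]
    constructor
    · rintro ⟨⟨⟨h1, h2, h3⟩, hne⟩, u, rfl⟩
      push_cast at h1 h2 h3
      refine ⟨u, ⟨⟨?_, ?_, ?_⟩, ?_⟩, rfl⟩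
      · exact (mul_dvd_mul_iff_left hp0).mp h1
      · exact (mul_dvd_mul_iff_left hp0).mp h2
      · exact (mul_dvd_mul_iff_left hp0).mp h3
      · rintro ⟨hx, hy, hz⟩
        exact hne ⟨by rw [hx, mul_zero], by rw [hy, mul_zero], by rw [hz, mul_zero]⟩
    · rintro ⟨u, ⟨⟨h1, h2, h3⟩, hne⟩, rfl⟩
      refine ⟨⟨⟨?_, ?_, ?_⟩, ?_⟩, ⟨u, rfl⟩⟩
      · push_cast; exact mul_dvd_mul_left _ h1
      · push_cast; exact mul_dvd_mul_left _ h2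
      · push_cast; exact mul_dvd_mul_left _ h3
      · rintro ⟨hx, hy, hz⟩
        refine hne ⟨?_, ?_, ?_⟩
        · rcases mul_eq_zero.mp hx with h | h
          · exact absurd h hp0
          · exact h
        · rcases mul_eq_zero.mp hy with h | h
          · exact absurd h hp0
          · exact h
        · rcases mul_eq_zero.mp hz with h | h
          · exact absurd h hp0
          · exact h
  · ext v
    simp only [Finset.mem_filter, Nat.mem_divisors, dvd_gcd3_iff, Finset.notMem_empty,
      iff_false, not_and]
    rintro ⟨⟨h1, h2, h3⟩, hne⟩ hpv
    have hpz : (p:ℤ) ∣ (v:ℤ) := by exact_mod_cast hpv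
    exact hxy ⟨hpz.trans h1, hpz.trans h2⟩

lemma key (hp : p.Prime) (n r m : ℤ) (F : ℕ → ℂ) :
    (∑ δ ∈ (gcd3 n r ((p:ℤ)*m)).divisors, F δ)
      + (if (p:ℤ) ∣ r ∧ (p:ℤ) ∣ m then
          ∑ δ ∈ (gcd3 n (r/(p:ℤ)) (m/(p:ℤ))).divisors, F (p*δ) else 0)
    = (∑ δ ∈ (gcd3 ((p:ℤ)*n) r m).divisors, F δ)
      + (if (p:ℤ) ∣ n ∧ (p:ℤ) ∣ r then
          ∑ δ ∈ (gcd3 (n/(p:ℤ)) (r/(p:ℤ)) m).divisors, F (p*δ) else 0) := by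
  have himg : ∀ g : ℕ, ∑ v ∈ g.divisors.image (fun u => p*u), F v
      = ∑ u ∈ g.divisors, F (p*u) := by
    intro g
    apply Finset.sum_image
    intro a _ b _ h
    exact Nat.eq_of_mul_eq_mul_left hp.pos h
  have hsplit : ∀ g : ℕ, ∑ δ ∈ g.divisors, F δ
      = (∑ δ ∈ g.divisors.filter (fun v => ¬ p ∣ v), F δ)
        + ∑ δ ∈ g.divisors.filter (fun v => p ∣ v), F δ := by
    intro g
    rw [← Finset.sum_filter_add_sum_filter_not g.divisors (fun v => p ∣ v) F, add_comm]
  rw [hsplit (gcd3 n r ((p:ℤ)*m)), hsplit (gcd3 ((p:ℤ)*n) r m)]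
  have hA : (gcd3 n r ((p:ℤ)*m)).divisors.filter (fun v => ¬ p ∣ v)
      = (gcd3 ((p:ℤ)*n) r m).divisors.filter (fun v => ¬ p ∣ v) := by
    rw [filter_not_p hp n r m, gcd3_comm ((p:ℤ)*n) r m, filter_not_p hp m r n,
      gcd3_comm m r n]
  have hB : ∑ δ ∈ (gcd3 n r ((p:ℤ)*m)).divisors.filter (fun v => p ∣ v), F δ
      = (if (p:ℤ) ∣ n ∧ (p:ℤ) ∣ r then
          ∑ δ ∈ (gcd3 (n/(p:ℤ)) (r/(p:ℤ)) m).divisors, F (p*δ) else 0) := by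
    rw [filter_p hp n r m]
    split_ifs with h
    · exact himg _
    · simp
  have hC : ∑ δ ∈ (gcd3 ((p:ℤ)*n) r m).divisors.filter (fun v => p ∣ v), F δ
      = (if (p:ℤ) ∣ r ∧ (p:ℤ) ∣ m then
          ∑ δ ∈ (gcd3 n (r/(p:ℤ)) (m/(p:ℤ))).divisors, F (p*δ) else 0) := by
    rw [gcd3_comm ((p:ℤ)*n) r m, filter_p hp m r n]
    by_cases h : (p:ℤ) ∣ r ∧ (p:ℤ) ∣ m
    · rw [if_pos ⟨h.2, h.1⟩, if_pos h, gcd3_comm (m/(p:ℤ)) (r/(p:ℤ)) n, himg]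
    · rw [if_neg (fun hc => h ⟨hc.2, hc.1⟩), if_neg h]
      simp
  rw [hA, hB, hC]
  ring

noncomputable def Sfun (k : ℤ) (a : ℤ → ℤ → ℤ → ℂ) (n r m : ℤ) : ℂ :=
  ∑ δ ∈ (gcd3 n r m).divisors,
    (δ : ℂ) ^ (k - 1) * a (n * m / (δ : ℤ) ^ 2) (r / (δ : ℤ)) 1

lemma lemB (hp : p.Prime) (k : ℤ) (a : ℤ → ℤ → ℤ → ℂ) (n r m : ℤ) :
    Sfun k a n r ((p:ℤ)*m)
      + (p:ℂ)^(k-1) * (if (p:ℤ) ∣ r ∧ (p:ℤ) ∣ m then Sfun k a n (r/(p:ℤ)) (m/(p:ℤ)) else 0)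
    = Sfun k a ((p:ℤ)*n) r m
      + (p:ℂ)^(k-1) * (if (p:ℤ) ∣ n ∧ (p:ℤ) ∣ r then Sfun k a (n/(p:ℤ)) (r/(p:ℤ)) m else 0) := by
  have hp0 : (p:ℤ) ≠ 0 := by exact_mod_cast hp.ne_zero
  have hppos : (0:ℤ) < (p:ℤ)^2 := by positivity
  have hppos1 : (0:ℤ) < (p:ℤ) := by exact_mod_cast hp.pos
  set F : ℕ → ℂ := fun δ =>
    (δ : ℂ) ^ (k - 1) * a (n * ((p:ℤ)*m) / (δ : ℤ) ^ 2) (r / (δ : ℤ)) 1 with hF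
  have h1 : Sfun k a n r ((p:ℤ)*m) = ∑ δ ∈ (gcd3 n r ((p:ℤ)*m)).divisors, F δ := rfl
  have h3 : Sfun k a ((p:ℤ)*n) r m = ∑ δ ∈ (gcd3 ((p:ℤ)*n) r m).divisors, F δ := by
    apply Finset.sum_congr rfl
    intro δ _
    rw [hF]
    rw [show (p:ℤ) * n * m = n * ((p:ℤ)*m) from by ring]
  have h2 : ((p:ℤ) ∣ r ∧ (p:ℤ) ∣ m) →
      (p:ℂ)^(k-1) * Sfun k a n (r/(p:ℤ)) (m/(p:ℤ))
        = ∑ δ ∈ (gcd3 n (r/(p:ℤ)) (m/(p:ℤ))).divisors, F (p*δ) := by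
    rintro ⟨⟨r', rfl⟩, ⟨m', rfl⟩⟩
    rw [Int.mul_ediv_cancel_left r' hp0, Int.mul_ediv_cancel_left m' hp0]
    rw [Sfun, Finset.mul_sum]
    refine Finset.sum_congr rfl fun δ hδ => ?_
    rw [hF]
    push_cast
    rw [mul_zpow,
      show n * ((p:ℤ) * ((p:ℤ)*m')) = (p:ℤ)^2 * (n * m') from by ring,
      show ((p:ℤ) * (δ:ℤ))^2 = (p:ℤ)^2 * ((δ:ℤ)^2) from by ring,
      Int.mul_ediv_mul_of_pos _ _ hppos,
      Int.mul_ediv_mul_of_pos _ _ hppos1]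
    ring
  have h4 : ((p:ℤ) ∣ n ∧ (p:ℤ) ∣ r) →
      (p:ℂ)^(k-1) * Sfun k a (n/(p:ℤ)) (r/(p:ℤ)) m
        = ∑ δ ∈ (gcd3 (n/(p:ℤ)) (r/(p:ℤ)) m).divisors, F (p*δ) := by
    rintro ⟨⟨n', rfl⟩, ⟨r', rfl⟩⟩
    rw [Int.mul_ediv_cancel_left n' hp0, Int.mul_ediv_cancel_left r' hp0]
    rw [Sfun, Finset.mul_sum]
    refine Finset.sum_congr rfl fun δ hδ => ?_
    rw [hF]
    push_cast
    rw [mul_zpow,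
      show (p:ℤ) * n' * ((p:ℤ)*m) = (p:ℤ)^2 * (n' * m) from by ring,
      show ((p:ℤ) * (δ:ℤ))^2 = (p:ℤ)^2 * ((δ:ℤ)^2) from by ring,
      Int.mul_ediv_mul_of_pos _ _ hppos,
      Int.mul_ediv_mul_of_pos _ _ hppos1]
    ring
  have hk := key hp n r m F
  by_cases G1 : (p:ℤ) ∣ r ∧ (p:ℤ) ∣ m <;> by_cases G2 : (p:ℤ) ∣ n ∧ (p:ℤ) ∣ r
  · rw [if_pos G1, if_pos G2] at hk ⊢
    rw [h1, h3, h2 G1, h4 G2]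
    exact hk
  · rw [if_pos G1, if_neg G2] at hk ⊢
    rw [h1, h3, h2 G1, mul_zero]
    exact hk
  · rw [if_neg G1, if_pos G2] at hk ⊢
    rw [h1, h3, h4 G2, mul_zero]
    exact hk
  · rw [if_neg G1, if_neg G2] at hk ⊢
    rw [h1, h3, mul_zero]
    exact hk

lemma sig_rec (hp : p.Prime) (k : ℤ) (x : ℤ) :
    sigmaz k x.natAbs + (p:ℂ)^(k-1) * sigmaz k x.natAbs
      = sigmaz k ((p:ℤ)*x).natAbs
        + (p:ℂ)^(k-1) * (if (p:ℤ) ∣ x then sigmaz k (x/(p:ℤ)).natAbs else 0) := by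
  have hk := key hp x 0 0 (fun δ => (δ:ℂ)^(k-1))
  have hmul : ∀ g : ℕ, (∑ δ ∈ g.divisors, ((p*δ : ℕ):ℂ)^(k-1))
      = (p:ℂ)^(k-1) * ∑ δ ∈ g.divisors, ((δ:ℕ):ℂ)^(k-1) := by
    intro g
    rw [Finset.mul_sum]
    refine Finset.sum_congr rfl fun δ _ => ?_
    push_cast
    rw [mul_zpow]
  simp only [mul_zero, Int.zero_ediv, dvd_zero, and_true, true_and, if_true,
    gcd3_zero_zero, hmul] at hk
  by_cases h : (p:ℤ) ∣ x
  · rw [if_pos h] at hk ⊢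
    exact hk
  · rw [if_neg h] at hk ⊢
    rw [mul_zero]
    exact hk


end CorollaryAux

/-- Corollary 1, coefficient level: the prime-by-prime conditions (ii) for all primes are
equivalent to the Maaß relations for `m ≥ 1` together with the divisor-sum relation on the
singular coefficients `a(n,0,0)`. -/
theorem corollary1_coefficients (N k : ℤ) (hN : 1 ≤ N) (a : ℤ → ℤ → ℤ → ℂ)
    (hsupp : ∀ n r m : ℤ, ¬(0 ≤ n ∧ 0 ≤ m ∧ r ^ 2 ≤ 4 * n * m * N) → a n r m = 0) :
    (∀ p : ℕ, p.Prime → HeckeCondition k p a) ↔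
    ((∀ n r m : ℤ, 1 ≤ m →
        a n r m = ∑ δ ∈ (gcd3 n r m).divisors,
          (δ : ℂ) ^ (k - 1) * a (n * m / (δ : ℤ) ^ 2) (r / (δ : ℤ)) 1) ∧
      (∀ n : ℤ, 1 ≤ n → a n 0 0 = sigmaz k n.toNat * a 1 0 0)) := by
  constructor
  · intro hH
    constructor
    · -- Maaß relations, by strong induction on m
      have main1 : ∀ M : ℕ, ∀ n r m : ℤ, 1 ≤ m → m ≤ (M:ℤ) → a n r m = Sfun k a n r m := by
        intro M
        induction M with
        | zero => intro n r m h1 h2; exfalso; omega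
        | succ M ih =>
          intro n r m h1 h2
          rcases eq_or_lt_of_le h1 with heq | hlt
          · -- m = 1
            subst heq
            have hg : gcd3 n r 1 = 1 := by simp [gcd3, Int.gcd]
            simp [Sfun, hg, Nat.divisors_one, _root_.one_zpow, Int.ediv_one]
          · -- 2 ≤ m
            have hm2 : 2 ≤ m := hlt
            obtain ⟨q, hq, m', rfl⟩ : ∃ q : ℕ, q.Prime ∧ ∃ m' : ℤ, m = (q:ℤ) * m' := by
              refine ⟨m.toNat.minFac, Nat.minFac_prime (by omega), ?_⟩
              have h := Nat.minFac_dvd m.toNat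
              have h2 : ((m.toNat.minFac : ℕ):ℤ) ∣ (m.toNat : ℤ) := Int.natCast_dvd_natCast.mpr h
              rw [Int.toNat_of_nonneg (by omega)] at h2
              exact h2
            have hq2 : (2:ℤ) ≤ (q:ℤ) := by exact_mod_cast hq.two_le
            push_cast at h2
            have hm'1 : 1 ≤ m' := by nlinarith
            have hm'M : m' ≤ (M:ℤ) := by
              nlinarith [mul_nonneg (by linarith : (0:ℤ) ≤ (q:ℤ)-2) (by linarith : (0:ℤ) ≤ m')]
            have hA := hH q hq n r m'
            have hB := lemB hq k a n r m'
            have i3 : a ((q:ℤ)*n) r m' = Sfun k a ((q:ℤ)*n) r m' := ih _ r m' hm'1 hm'M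
            have i2 : (if (q:ℤ) ∣ r ∧ (q:ℤ) ∣ m' then a n (r/(q:ℤ)) (m'/(q:ℤ)) else 0)
                = (if (q:ℤ) ∣ r ∧ (q:ℤ) ∣ m' then Sfun k a n (r/(q:ℤ)) (m'/(q:ℤ)) else 0) := by
              split_ifs with h
              · obtain ⟨m'', rfl⟩ := h.2
                have hq0 : (q:ℤ) ≠ 0 := by omega
                rw [Int.mul_ediv_cancel_left m'' hq0]
                exact ih _ _ m'' (by nlinarith) (by nlinarith)
              · rfl
            have i4 : (if (q:ℤ) ∣ n ∧ (q:ℤ) ∣ r then a (n/(q:ℤ)) (r/(q:ℤ)) m' else 0)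
                = (if (q:ℤ) ∣ n ∧ (q:ℤ) ∣ r then Sfun k a (n/(q:ℤ)) (r/(q:ℤ)) m' else 0) := by
              split_ifs with h
              · exact ih _ _ m' hm'1 hm'M
              · rfl
            rw [i2, i3, i4] at hA
            linear_combination hA - hB
      intro n r m hm
      exact main1 m.toNat n r m hm (by omega)
    · -- singular coefficients
      have main2 : ∀ M : ℕ, ∀ n : ℤ, 1 ≤ n → n ≤ (M:ℤ) →
          a n 0 0 = sigmaz k n.natAbs * a 1 0 0 := by
        intro M
        induction M with
        | zero => intro n h1 h2; exfalso; omega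
        | succ M ih =>
          intro n h1 h2
          rcases eq_or_lt_of_le h1 with heq | hlt
          · rw [← heq]
            norm_num [sigmaz, Nat.divisors_one]
          · have hn2 : 2 ≤ n := hlt
            obtain ⟨q, hq, n', rfl⟩ : ∃ q : ℕ, q.Prime ∧ ∃ n' : ℤ, n = (q:ℤ) * n' := by
              refine ⟨n.toNat.minFac, Nat.minFac_prime (by omega), ?_⟩
              have h := Nat.minFac_dvd n.toNat
              have h2 : ((n.toNat.minFac : ℕ):ℤ) ∣ (n.toNat : ℤ) := Int.natCast_dvd_natCast.mpr h
              rw [Int.toNat_of_nonneg (by omega)] at h2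
              exact h2
            have hq2 : (2:ℤ) ≤ (q:ℤ) := by exact_mod_cast hq.two_le
            have hq0 : (q:ℤ) ≠ 0 := by omega
            push_cast at h2
            have hn'1 : 1 ≤ n' := by nlinarith
            have hn'M : n' ≤ (M:ℤ) := by
              nlinarith [mul_nonneg (by linarith : (0:ℤ) ≤ (q:ℤ)-2) (by linarith : (0:ℤ) ≤ n')]
            have hA := hH q hq n' 0 0
            simp only [mul_zero, Int.zero_ediv, dvd_zero, and_true, true_and, if_true] at hA
            have hS := sig_rec hq k n'
            have i1 : a n' 0 0 = sigmaz k n'.natAbs * a 1 0 0 := ih n' hn'1 hn'M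
            by_cases h : (q:ℤ) ∣ n'
            · obtain ⟨n'', rfl⟩ := h
              rw [if_pos ⟨n'', rfl⟩] at hA
              rw [if_pos ⟨n'', rfl⟩] at hS
              rw [Int.mul_ediv_cancel_left n'' hq0] at hA hS
              have i2 : a n'' 0 0 = sigmaz k n''.natAbs * a 1 0 0 :=
                ih n'' (by nlinarith) (by nlinarith)
              rw [i1, i2] at hA
              linear_combination hS * (a 1 0 0) - hA
            · rw [if_neg h] at hA hS
              rw [i1] at hA
              linear_combination hS * (a 1 0 0) - hA
      intro n hn
      have := main2 n.toNat n hn (by omega)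
      rwa [show n.natAbs = n.toNat from by omega] at this
  · rintro ⟨h1, h2⟩ p hp n r m
    have hp0 : (p:ℤ) ≠ 0 := by exact_mod_cast hp.ne_zero
    have hp1 : (1:ℤ) ≤ (p:ℤ) := by exact_mod_cast hp.one_lt.le
    have hMaass : ∀ n r m : ℤ, 1 ≤ m → a n r m = Sfun k a n r m := fun n r m hm => h1 n r m hm
    rcases lt_trichotomy m 0 with hm | hm | hm
    · -- m < 0 : everything vanishes
      have z1 : a n r ((p:ℤ)*m) = 0 := by
        apply hsupp; rintro ⟨-, h, -⟩; nlinarith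
      have z2 : a ((p:ℤ)*n) r m = 0 := by
        apply hsupp; rintro ⟨-, h, -⟩; omega
      have z3 : (if (p:ℤ) ∣ r ∧ (p:ℤ) ∣ m then a n (r/(p:ℤ)) (m/(p:ℤ)) else 0) = 0 := by
        split_ifs with h
        · obtain ⟨m', rfl⟩ := h.2
          rw [Int.mul_ediv_cancel_left m' hp0]
          apply hsupp; rintro ⟨-, hh, -⟩; nlinarith
        · rfl
      have z4 : (if (p:ℤ) ∣ n ∧ (p:ℤ) ∣ r then a (n/(p:ℤ)) (r/(p:ℤ)) m else 0) = 0 := by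
        split_ifs with h
        · apply hsupp; rintro ⟨-, hh, -⟩; omega
        · rfl
      rw [z1, z2, z3, z4, mul_zero]
    · -- m = 0
      subst hm
      rcases lt_trichotomy n 0 with hn | hn | hn
      · -- n < 0 : everything vanishes
        have z1 : a n r ((p:ℤ)*0) = 0 := by
          apply hsupp; rintro ⟨h, -, -⟩; omega
        have z2 : a ((p:ℤ)*n) r 0 = 0 := by
          apply hsupp; rintro ⟨h, -, -⟩; nlinarith
        have z3 : (if (p:ℤ) ∣ r ∧ (p:ℤ) ∣ (0:ℤ) then a n (r/(p:ℤ)) ((0:ℤ)/(p:ℤ)) else 0) = 0 := by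
          split_ifs with h
          · apply hsupp; rintro ⟨hh, -, -⟩; omega
          · rfl
        have z4 : (if (p:ℤ) ∣ n ∧ (p:ℤ) ∣ r then a (n/(p:ℤ)) (r/(p:ℤ)) 0 else 0) = 0 := by
          split_ifs with h
          · obtain ⟨n', rfl⟩ := h.1
            rw [Int.mul_ediv_cancel_left n' hp0]
            apply hsupp; rintro ⟨hh, -, -⟩; nlinarith
          · rfl
        rw [z1, z2, z3, z4, mul_zero]
      · -- n = 0
        subst hn
        rcases eq_or_ne r 0 with rfl | hr
        · simp only [mul_zero, Int.zero_ediv, dvd_zero, and_true, and_self, if_true]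
        · have hrsq : 0 < r^2 := by positivity
          have z1 : a 0 r ((p:ℤ)*0) = 0 := by
            apply hsupp; rintro ⟨-, -, h⟩; nlinarith
          have z2 : a ((p:ℤ)*0) r 0 = 0 := by
            apply hsupp; rintro ⟨-, -, h⟩; nlinarith
          have z3 : (if (p:ℤ) ∣ r ∧ (p:ℤ) ∣ (0:ℤ) then a 0 (r/(p:ℤ)) ((0:ℤ)/(p:ℤ)) else 0) = 0 := by
            split_ifs with h
            · obtain ⟨r', rfl⟩ := h.1
              have hr' : r' ≠ 0 := by rintro rfl; simp at hr
              have : 0 < r'^2 := by positivity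
              rw [Int.mul_ediv_cancel_left r' hp0, Int.zero_ediv]
              apply hsupp; rintro ⟨-, -, hh⟩; nlinarith
            · rfl
          have z4 : (if (p:ℤ) ∣ (0:ℤ) ∧ (p:ℤ) ∣ r then a ((0:ℤ)/(p:ℤ)) (r/(p:ℤ)) 0 else 0) = 0 := by
            split_ifs with h
            · obtain ⟨r', rfl⟩ := h.2
              have hr' : r' ≠ 0 := by rintro rfl; simp at hr
              have : 0 < r'^2 := by positivity
              rw [Int.mul_ediv_cancel_left r' hp0, Int.zero_ediv]
              apply hsupp; rintro ⟨-, -, hh⟩; nlinarith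
            · rfl
          rw [z1, z2, z3, z4, mul_zero]
      · -- 1 ≤ n
        rcases eq_or_ne r 0 with rfl | hr
        · -- singular case via sigma recursion
          have hA := sig_rec hp k n
          simp only [mul_zero, Int.zero_ediv, dvd_zero, and_true, true_and, if_true]
          have e1 : a n 0 0 = sigmaz k n.natAbs * a 1 0 0 := by
            have := h2 n hn
            rwa [show n.toNat = n.natAbs from by omega] at this
          have e2 : a ((p:ℤ)*n) 0 0 = sigmaz k ((p:ℤ)*n).natAbs * a 1 0 0 := by
            have := h2 ((p:ℤ)*n) (by nlinarith)
            have h0 : 0 ≤ (p:ℤ)*n := by nlinarith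
            rwa [show ((p:ℤ)*n).toNat = ((p:ℤ)*n).natAbs from by omega] at this
          by_cases h : (p:ℤ) ∣ n
          · obtain ⟨n', rfl⟩ := h
            rw [if_pos ⟨n', rfl⟩] at hA ⊢
            rw [Int.mul_ediv_cancel_left n' hp0] at hA ⊢
            have hn' : 1 ≤ n' := by nlinarith
            have e3 : a n' 0 0 = sigmaz k n'.natAbs * a 1 0 0 := by
              have := h2 n' hn'
              rwa [show n'.toNat = n'.natAbs from by omega] at this
            rw [e1, e2, e3]
            linear_combination hA * (a 1 0 0)
          · rw [if_neg h] at hA ⊢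
            rw [e1, e2]
            linear_combination hA * (a 1 0 0)
        · -- r ≠ 0, m = 0 : everything vanishes
          have hrsq : 0 < r^2 := by positivity
          have z1 : a n r ((p:ℤ)*0) = 0 := by
            apply hsupp; rintro ⟨-, -, h⟩; nlinarith
          have z2 : a ((p:ℤ)*n) r 0 = 0 := by
            apply hsupp; rintro ⟨-, -, h⟩; nlinarith
          have z3 : (if (p:ℤ) ∣ r ∧ (p:ℤ) ∣ (0:ℤ) then a n (r/(p:ℤ)) ((0:ℤ)/(p:ℤ)) else 0) = 0 := by
            split_ifs with h
            · obtain ⟨r', rfl⟩ := h.1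
              have hr' : r' ≠ 0 := by rintro rfl; simp at hr
              have : 0 < r'^2 := by positivity
              rw [Int.mul_ediv_cancel_left r' hp0, Int.zero_ediv]
              apply hsupp; rintro ⟨-, -, hh⟩; nlinarith
            · rfl
          have z4 : (if (p:ℤ) ∣ n ∧ (p:ℤ) ∣ r then a (n/(p:ℤ)) (r/(p:ℤ)) 0 else 0) = 0 := by
            split_ifs with h
            · obtain ⟨r', rfl⟩ := h.2
              have hr' : r' ≠ 0 := by rintro rfl; simp at hr
              have : 0 < r'^2 := by positivity
              rw [Int.mul_ediv_cancel_left r' hp0]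
              apply hsupp; rintro ⟨-, -, hh⟩; nlinarith
            · rfl
          rw [z1, z2, z3, z4, mul_zero]
    · -- 1 ≤ m : the Maass case
      have e1 : a n r ((p:ℤ)*m) = Sfun k a n r ((p:ℤ)*m) := hMaass _ _ _ (by nlinarith)
      have e3 : a ((p:ℤ)*n) r m = Sfun k a ((p:ℤ)*n) r m := hMaass _ _ _ hm
      have e2 : (if (p:ℤ) ∣ r ∧ (p:ℤ) ∣ m then a n (r/(p:ℤ)) (m/(p:ℤ)) else 0)
          = (if (p:ℤ) ∣ r ∧ (p:ℤ) ∣ m then Sfun k a n (r/(p:ℤ)) (m/(p:ℤ)) else 0) := by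
        split_ifs with h
        · obtain ⟨m', rfl⟩ := h.2
          rw [Int.mul_ediv_cancel_left m' hp0]
          exact hMaass _ _ _ (by nlinarith)
        · rfl
      have e4 : (if (p:ℤ) ∣ n ∧ (p:ℤ) ∣ r then a (n/(p:ℤ)) (r/(p:ℤ)) m else 0)
          = (if (p:ℤ) ∣ n ∧ (p:ℤ) ∣ r then Sfun k a (n/(p:ℤ)) (r/(p:ℤ)) m else 0) := by
        split_ifs with h
        · exact hMaass _ _ _ hm
        · rfl
      rw [e1, e2, e3, e4]
      exact lemB hp k a n r m
end

section
/- Let N ≥ 1, let d be a positive divisor of N, and let α, γ ∈ ℤ satisfy αd − γN/d = 1. Then the 3×3 matrix M₆ := [[d, −γ, γ²N/d], [−2N, αd + γN/d, −2αγN], [N/d, −α, α²d]] has integer entries and determinant 1, and for every (n,r,m) ∈ ℤ³ the vector (n′,r′,m′) := M₆·(n,r,m)ᵗ satisfies gcd(n′,r′,m′) = gcd(n,r,m). -/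
open scoped Classical
open Complex Matrix Finset

/-- The transformation matrix (6): it lies in `SL₃(ℤ)` and preserves `gcd(n,r,m)`. -/
theorem matrix6_SL3_and_gcd (N d : ℤ) (hN : 1 ≤ N) (hd : 0 < d) (hdN : d ∣ N)
    (α γ : ℤ) (h : α * d - γ * (N / d) = 1) :
    (!![d, -γ, γ ^ 2 * (N / d);
        -2 * N, α * d + γ * (N / d), -2 * α * γ * N;
        N / d, -α, α ^ 2 * d] : Matrix (Fin 3) (Fin 3) ℤ).det = 1 ∧
    ∀ n r m : ℤ,
      Int.gcd (Int.gcd (d * n - γ * r + γ ^ 2 * (N / d) * m)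
          (-2 * N * n + (α * d + γ * (N / d)) * r - 2 * α * γ * N * m))
        ((N / d) * n - α * r + α ^ 2 * d * m)
      = Int.gcd (Int.gcd n r) m := by
  obtain ⟨e, he⟩ := hdN
  subst he
  rw [Int.mul_ediv_cancel_left e hd.ne'] at h ⊢
  constructor
  · rw [Matrix.det_fin_three]
    simp only [Matrix.cons_val', Matrix.cons_val_zero, Matrix.cons_val_one, Matrix.head_cons,
      Matrix.empty_val', Matrix.cons_val_fin_one, Matrix.head_fin_const, Matrix.cons_val_two,
      Matrix.tail_cons, Matrix.of_apply]
    linear_combination ((α * d - γ * e) ^ 2 + (α * d - γ * e) + 1) * h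
  · intro n r m
    set n' : ℤ := d * n - γ * r + γ ^ 2 * e * m with hn'
    set r' : ℤ := -2 * (d * e) * n + (α * d + γ * e) * r - 2 * α * γ * (d * e) * m with hr'
    set m' : ℤ := e * n - α * r + α ^ 2 * d * m with hm'
    have hn : n = α ^ 2 * d * n' + α * γ * r' + γ ^ 2 * e * m' := by
      rw [hn', hr', hm']; linear_combination (-n + e * γ * n - d * α * n) * h
    have hr : r = 2 * α * (d * e) * n' + (α * d + γ * e) * r' + 2 * γ * (d * e) * m' := by
      rw [hn', hr', hm']; linear_combination (-r + e * γ * r - d * α * r) * h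
    have hm : m = e * n' + r' + d * m' := by
      rw [hn', hr', hm']; linear_combination (-m + e * γ * m - d * α * m) * h
    apply Nat.dvd_antisymm
    · have h1 : (↑(Int.gcd (Int.gcd n' r') m') : ℤ) ∣ n' :=
        (Int.gcd_dvd_left _ _).trans (Int.gcd_dvd_left _ _)
      have h2 : (↑(Int.gcd (Int.gcd n' r') m') : ℤ) ∣ r' :=
        (Int.gcd_dvd_left _ _).trans (Int.gcd_dvd_right _ _)
      have h3 : (↑(Int.gcd (Int.gcd n' r') m') : ℤ) ∣ m' := Int.gcd_dvd_right _ _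
      have dn : (↑(Int.gcd (Int.gcd n' r') m') : ℤ) ∣ n := by
        rw [hn]; exact dvd_add (dvd_add (h1.mul_left _) (h2.mul_left _)) (h3.mul_left _)
      have dr : (↑(Int.gcd (Int.gcd n' r') m') : ℤ) ∣ r := by
        rw [hr]; exact dvd_add (dvd_add (h1.mul_left _) (h2.mul_left _)) (h3.mul_left _)
      have dm : (↑(Int.gcd (Int.gcd n' r') m') : ℤ) ∣ m := by
        rw [hm]; exact dvd_add (dvd_add (h1.mul_left _) h2) (h3.mul_left _)
      exact Int.natCast_dvd_natCast.mp (Int.dvd_coe_gcd (Int.dvd_coe_gcd dn dr) dm)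
    · have h1 : (↑(Int.gcd (Int.gcd n r) m) : ℤ) ∣ n :=
        (Int.gcd_dvd_left _ _).trans (Int.gcd_dvd_left _ _)
      have h2 : (↑(Int.gcd (Int.gcd n r) m) : ℤ) ∣ r :=
        (Int.gcd_dvd_left _ _).trans (Int.gcd_dvd_right _ _)
      have h3 : (↑(Int.gcd (Int.gcd n r) m) : ℤ) ∣ m := Int.gcd_dvd_right _ _
      have dn : (↑(Int.gcd (Int.gcd n r) m) : ℤ) ∣ n' := by
        rw [hn']
        exact dvd_add (dvd_sub (h1.mul_left _) (h2.mul_left _)) (h3.mul_left _)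
      have dr : (↑(Int.gcd (Int.gcd n r) m) : ℤ) ∣ r' := by
        rw [hr']
        exact dvd_sub (dvd_add (h1.mul_left _) (h2.mul_left _)) (h3.mul_left _)
      have dm : (↑(Int.gcd (Int.gcd n r) m) : ℤ) ∣ m' := by
        rw [hm']
        exact dvd_add (dvd_sub (h1.mul_left _) (h2.mul_left _)) (h3.mul_left _)
      exact Int.natCast_dvd_natCast.mp (Int.dvd_coe_gcd (Int.dvd_coe_gcd dn dr) dm)
end

section
/- Let N ≥ 1 be squarefree and let r, r′ ∈ ℤ satisfy r² ≡ r′² (mod 4N). Then there exists a positive divisor d of N such that r ≡ −r′ (mod 2d) and r ≡ r′ (mod 2N/d). -/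
open scoped Classical
open Complex Matrix Finset

/-- If `N` is squarefree and `r² ≡ r′² (mod 4N)`, there is a divisor `d` of `N` with
`r ≡ -r′ (mod 2d)` and `r ≡ r′ (mod 2N/d)`. -/
theorem exists_divisor_of_sq_congruent (N : ℤ) (hN : 1 ≤ N) (hsf : Squarefree N)
    (r r' : ℤ) (h : r ^ 2 ≡ r' ^ 2 [ZMOD 4 * N]) :
    ∃ d : ℤ, 0 < d ∧ d ∣ N ∧ r ≡ -r' [ZMOD 2 * d] ∧ r ≡ r' [ZMOD 2 * (N / d)] := by
  have h4N : (4 * N) ∣ (r' ^ 2 - r ^ 2) := Int.ModEq.dvd h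
  have h2 : (2 : ℤ) ∣ (r - r') := by
    have h2' : (2 : ℤ) ∣ (r - r') * (r + r') := by
      have hd : (2 : ℤ) ∣ 4 * N := ⟨2 * N, by ring⟩
      have := hd.trans h4N
      have : (2 : ℤ) ∣ -(r' ^ 2 - r ^ 2) := this.neg_right
      convert this using 1; ring
    rcases Int.prime_two.2.2 _ _ h2' with hh | hh
    · exact hh
    · omega
  obtain ⟨a, ha⟩ := h2
  have hb : (2 : ℤ) ∣ (r + r') := ⟨a + r', by omega⟩
  obtain ⟨b, hbeq⟩ := hb
  have hNab : N ∣ a * b := by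
    obtain ⟨k, hk⟩ := h4N
    refine ⟨-k, ?_⟩
    have h4 : 4 * (a * b) = 4 * (N * (-k)) := by
      linear_combination (-1 : ℤ) * hk - (r - r') * hbeq - 2 * b * ha
    linarith
  obtain ⟨d₁, d₂, hd₁, hd₂, hNeq⟩ := exists_dvd_and_dvd_of_dvd_mul hNab
  have hd₂ne : d₂ ≠ 0 := by
    rintro rfl; rw [mul_zero] at hNeq; omega
  set s : ℤ := if d₂ < 0 then -1 else 1 with hs
  have hss : s * s = 1 := by rw [hs]; split <;> ring
  have hdpos : 0 < s * d₂ := by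
    rw [hs]; rcases lt_trichotomy d₂ 0 with h' | h' | h' <;> simp [h'] <;> omega
  have hNeq' : N = (s * d₁) * (s * d₂) := by
    rw [hNeq]; linear_combination (-(d₁ * d₂)) * hss
  have hsd₂b : s * d₂ ∣ b := dvd_trans ⟨s, by linear_combination -d₂ * hss⟩ hd₂
  have hsd₁a : s * d₁ ∣ a := dvd_trans ⟨s, by linear_combination -d₁ * hss⟩ hd₁
  have hdiv : N / (s * d₂) = s * d₁ := by
    rw [hNeq', Int.mul_ediv_cancel _ (by positivity)]
  refine ⟨s * d₂, hdpos, ⟨s * d₁, by rw [hNeq']; ring⟩, ?_, ?_⟩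
  · rw [Int.modEq_iff_dvd]
    obtain ⟨c, hc⟩ := hsd₂b
    exact ⟨-c, by linear_combination -hbeq - 2 * hc⟩
  · rw [hdiv, Int.modEq_iff_dvd]
    obtain ⟨c, hc⟩ := hsd₁a
    exact ⟨-c, by linear_combination -ha - 2 * hc⟩
end

section
/- Let N ≥ 1 be squarefree, let n, m ≥ 0 and r ∈ ℤ with (n,r,m) ≠ (0,0,0), and suppose the matrix T := [[n, r/2],[r/2, mN]] is positive semidefinite with det T = 0 (i.e. 4nmN = r²). Then there exist a positive divisor d of N and integers a, b, c, e with the matrix U := (1/√d)·[[ad, bN],[c, ed]] satisfying det U = 1 and UᵗTU = [[t, 0],[0, 0]], where t := gcd(n,r,m). -/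
open scoped Classical
open Complex Matrix Finset

private lemma real_side (N d a b c e n r m : ℤ) (t : ℕ) (hd : 0 < d)
    (H1 : (a*d)*(e*d) - (b*N)*c = d)
    (H2 : n*(a*d)^2 + r*((a*d)*c) + m*N*c^2 = t*d)
    (H3 : 2*(n*((a*d)*(b*N))) + r*((a*d)*(e*d) + (b*N)*c) + 2*(m*N*(c*(e*d))) = 0)
    (H4 : n*(b*N)^2 + r*((b*N)*(e*d)) + m*N*(e*d)^2 = 0) :
    (((Real.sqrt d)⁻¹ •
          !![((a * d : ℤ) : ℝ), ((b * N : ℤ) : ℝ); ((c : ℤ) : ℝ), ((e * d : ℤ) : ℝ)] :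
        Matrix (Fin 2) (Fin 2) ℝ).det = 1) ∧
      ((Real.sqrt d)⁻¹ •
          !![((a * d : ℤ) : ℝ), ((b * N : ℤ) : ℝ); ((c : ℤ) : ℝ), ((e * d : ℤ) : ℝ)])ᵀ *
        (!![(n : ℝ), (r : ℝ) / 2; (r : ℝ) / 2, (m : ℝ) * (N : ℝ)]) *
        ((Real.sqrt d)⁻¹ •
          !![((a * d : ℤ) : ℝ), ((b * N : ℤ) : ℝ); ((c : ℤ) : ℝ), ((e * d : ℤ) : ℝ)])
      = !![((t : ℕ) : ℝ), 0; 0, 0] := by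
  have hd0 : (0:ℝ) < (d:ℝ) := by exact_mod_cast hd
  set s : ℝ := (Real.sqrt d)⁻¹ with hs
  have hs2 : s * s = (d:ℝ)⁻¹ := by
    rw [hs, ← mul_inv, Real.mul_self_sqrt hd0.le]
  set M : Matrix (Fin 2) (Fin 2) ℝ :=
    !![((a * d : ℤ) : ℝ), ((b * N : ℤ) : ℝ); ((c : ℤ) : ℝ), ((e * d : ℤ) : ℝ)] with hM
  have hdetM : M.det = (d:ℝ) := by
    rw [hM, Matrix.det_fin_two_of]
    push_cast
    exact_mod_cast congrArg (Int.cast : ℤ → ℝ) H1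
  constructor
  · rw [Matrix.det_smul, hdetM]
    simp [Fintype.card_fin, pow_two, hs2, inv_mul_cancel₀ hd0.ne']
  · have key : Mᵀ * !![(n : ℝ), (r : ℝ) / 2; (r : ℝ) / 2, (m : ℝ) * (N : ℝ)] * M
        = (d:ℝ) • !![((t : ℕ) : ℝ), 0; 0, 0] := by
      rw [hM]
      ext i j
      fin_cases i <;> fin_cases j <;>
        simp [Matrix.mul_apply, Fin.sum_univ_two, Matrix.smul_apply, Matrix.transpose_apply,
          Matrix.vecHead, Matrix.vecTail] <;>
        push_cast <;>
      [ (have := congrArg (Int.cast : ℤ → ℝ) H2; push_cast at this; linear_combination this);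
        (have := congrArg (Int.cast : ℤ → ℝ) H3; push_cast at this; linear_combination this/2);
        (have := congrArg (Int.cast : ℤ → ℝ) H3; push_cast at this; linear_combination this/2);
        (have := congrArg (Int.cast : ℤ → ℝ) H4; push_cast at this; linear_combination this) ]
    calc (s • M)ᵀ * !![(n : ℝ), (r : ℝ) / 2; (r : ℝ) / 2, (m : ℝ) * (N : ℝ)] * (s • M)
        = (s*s) • (Mᵀ * !![(n : ℝ), (r : ℝ) / 2; (r : ℝ) / 2, (m : ℝ) * (N : ℝ)] * M) := by
          rw [Matrix.transpose_smul, Matrix.smul_mul, Matrix.smul_mul, Matrix.mul_smul, smul_smul]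
      _ = ((d:ℝ)⁻¹ * (d:ℝ)) • !![((t : ℕ) : ℝ), 0; 0, 0] := by rw [hs2, key, smul_smul]
      _ = !![((t : ℕ) : ℝ), 0; 0, 0] := by rw [inv_mul_cancel₀ hd0.ne', one_smul]

private lemma coprime_of_primes (x y : ℤ)
    (h : ∀ p : ℕ, p.Prime → (p:ℤ) ∣ x → (p:ℤ) ∣ y → False) : IsCoprime x y := by
  rw [Int.isCoprime_iff_gcd_eq_one]
  by_contra hg
  rcases Nat.eq_zero_or_pos (Int.gcd x y) with h0 | hpos
  · rw [Int.gcd_eq_zero_iff] at h0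
    exact h 2 Nat.prime_two (h0.1 ▸ dvd_zero _) (h0.2 ▸ dvd_zero _)
  · obtain ⟨p, pp, pdvd⟩ := Nat.exists_prime_and_dvd hg
    exact h p pp ((Int.natCast_dvd_natCast.mpr pdvd).trans (Int.gcd_dvd_left _ _))
      ((Int.natCast_dvd_natCast.mpr pdvd).trans (Int.gcd_dvd_right _ _))

/-- Lemma 3, matrix reduction: every nonzero singular positive semidefinite paramodular
matrix `T` can be brought to `diag(gcd(n,r,m), 0)` by some `U ∈ Γ°(N)V_d`, `d ∣ N`. -/
theorem singular_matrix_reduction (N : ℤ) (hN : 1 ≤ N) (hsf : Squarefree N)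
    (n r m : ℤ) (hn : 0 ≤ n) (hm : 0 ≤ m) (hne : ¬(n = 0 ∧ r = 0 ∧ m = 0))
    (hdet : 4 * n * m * N = r ^ 2) :
    ∃ d : ℤ, 0 < d ∧ d ∣ N ∧ ∃ a b c e : ℤ,
      (((Real.sqrt d)⁻¹ •
          !![((a * d : ℤ) : ℝ), ((b * N : ℤ) : ℝ); ((c : ℤ) : ℝ), ((e * d : ℤ) : ℝ)] :
        Matrix (Fin 2) (Fin 2) ℝ).det = 1) ∧
      ((Real.sqrt d)⁻¹ •
          !![((a * d : ℤ) : ℝ), ((b * N : ℤ) : ℝ); ((c : ℤ) : ℝ), ((e * d : ℤ) : ℝ)])ᵀ *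
        (!![(n : ℝ), (r : ℝ) / 2; (r : ℝ) / 2, (m : ℝ) * (N : ℝ)]) *
        ((Real.sqrt d)⁻¹ •
          !![((a * d : ℤ) : ℝ), ((b * N : ℤ) : ℝ); ((c : ℤ) : ℝ), ((e * d : ℤ) : ℝ)])
      = !![((gcd3 n r m : ℕ) : ℝ), 0; 0, 0] := by
  set t : ℕ := gcd3 n r m with ht
  have hN0 : N ≠ 0 := by omega
  -- t divides n r m
  have htn : (t:ℤ) ∣ n := (Int.gcd_dvd_left _ _).trans (Int.gcd_dvd_left _ _)
  have htr : (t:ℤ) ∣ r := (Int.gcd_dvd_left _ _).trans (Int.gcd_dvd_right _ _)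
  have htm : (t:ℤ) ∣ m := Int.gcd_dvd_right _ _
  have htpos : 0 < t := by
    rcases Nat.eq_zero_or_pos t with h0 | h; swap; · exact h
    rw [ht, gcd3, Int.gcd_eq_zero_iff] at h0
    have h1 := h0.1
    rw [Int.natCast_eq_zero, Int.gcd_eq_zero_iff] at h1
    exact absurd ⟨h1.1, h1.2, h0.2⟩ hne
  have htz : (0:ℤ) < t := by exact_mod_cast htpos
  by_cases hn0 : n = 0
  · -- then r = 0, m > 0
    have hr0 : r = 0 := by
      have h2 : r ^ 2 = 0 := by rw [← hdet, hn0]; ring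
      exact pow_eq_zero_iff two_ne_zero |>.mp h2
    have hmne : m ≠ 0 := fun h => hne ⟨hn0, hr0, h⟩
    have htmeq : (t:ℤ) = m := by
      rw [ht, gcd3, hn0, hr0]
      simp [Int.natAbs_of_nonneg hm]
    refine ⟨N, by omega, dvd_refl N, 0, -1, 1, 0, ?_⟩
    have := real_side N N 0 (-1) 1 0 n r m t (by omega)
      (by ring)
      (by rw [hn0, hr0]; linear_combination (-N) * htmeq)
      (by rw [hn0, hr0]; ring)
      (by rw [hn0, hr0]; ring)
    exact ⟨this.1, this.2⟩
  by_cases hm0 : m = 0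
  ·
    have hr0 : r = 0 := by
      have h2 : r ^ 2 = 0 := by rw [← hdet, hm0]; ring
      exact pow_eq_zero_iff two_ne_zero |>.mp h2
    have htneq : (t:ℤ) = n := by
      rw [ht, gcd3, hm0, hr0]
      simp [Int.natAbs_of_nonneg hn]
    refine ⟨1, one_pos, one_dvd N, 1, 0, 0, 1, ?_⟩
    have := real_side N 1 1 0 0 1 n r m t one_pos
      (by ring)
      (by rw [hm0]; linear_combination -htneq)
      (by rw [hr0, hm0]; ring)
      (by rw [hr0, hm0]; ring)
    exact ⟨this.1, this.2⟩
  -- main case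
  have hnpos : 0 < n := lt_of_le_of_ne hn (Ne.symm hn0)
  have hmpos : 0 < m := lt_of_le_of_ne hm (Ne.symm hm0)
  obtain ⟨n₁, hn₁⟩ := htn
  obtain ⟨r₁, hr₁⟩ := htr
  obtain ⟨m₁, hm₁⟩ := htm
  have hn₁pos : 0 < n₁ := by nlinarith
  have hm₁pos : 0 < m₁ := by nlinarith
  have hT : r₁ ^ 2 = 4 * n₁ * m₁ * N := by
    have h2 : (t:ℤ)^2 * r₁^2 = (t:ℤ)^2 * (4*n₁*m₁*N) := by
      rw [hn₁, hm₁, hr₁] at hdet; linear_combination -hdet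
    exact mul_left_cancel₀ (pow_ne_zero 2 htz.ne') h2
  -- gcd3 n₁ r₁ m₁ = 1
  have hg1 : gcd3 n₁ r₁ m₁ = 1 := by
    have key : t = t * gcd3 n₁ r₁ m₁ := by
      conv_lhs => rw [ht, gcd3, hn₁, hr₁, hm₁]
      rw [Int.gcd_mul_left, Int.natAbs_natCast, gcd3]
      push_cast
      rw [Int.gcd_mul_left, Int.natAbs_natCast]
    refine (Nat.eq_of_mul_eq_mul_left htpos ?_).symm
    rw [mul_one]; exact key
  -- r₁ = 2ρ
  have h2r : (2:ℤ) ∣ r₁ := by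
    have : (2:ℤ) ∣ r₁ ^ 2 := by rw [hT]; exact ⟨2*n₁*m₁*N, by ring⟩
    exact Int.prime_two.dvd_of_dvd_pow this
  obtain ⟨ρ, hρdef⟩ := h2r
  have hρ : ρ ^ 2 = n₁ * m₁ * N := by
    have : (2:ℤ)^2 * ρ^2 = 2^2 * (n₁*m₁*N) := by rw [hρdef] at hT; linear_combination hT
    exact mul_left_cancel₀ (by norm_num) this
  -- d = gcd(n₁, N)
  set d : ℤ := (Int.gcd n₁ N : ℤ) with hd
  have hdpos : 0 < d := by
    have : Int.gcd n₁ N ≠ 0 := by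
      rw [Ne, Int.gcd_eq_zero_iff]; rintro ⟨-, h⟩; exact hN0 h
    positivity
  have hddvdN : d ∣ N := Int.gcd_dvd_right _ _
  have hddvdn₁ : d ∣ n₁ := Int.gcd_dvd_left _ _
  obtain ⟨N', hN'⟩ := hddvdN
  obtain ⟨n₂, hn₂⟩ := hddvdn₁
  have hN'pos : 0 < N' := by nlinarith
  have hn₂pos : 0 < n₂ := by nlinarith
  -- coprime d N'
  have cdN' : IsCoprime d N' := by
    rw [Int.isCoprime_iff_gcd_eq_one]
    have hu : IsUnit ((Int.gcd d N' : ℤ)) := hsf _ (by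
      rw [hN']; exact mul_dvd_mul (Int.gcd_dvd_left _ _) (Int.gcd_dvd_right _ _))
    rcases Int.isUnit_iff.mp hu with h | h
    · exact_mod_cast h
    · omega
  -- coprime n₁ m₁
  have cn₁m₁ : IsCoprime n₁ m₁ := by
    refine coprime_of_primes _ _ (fun p pp hp1 hp2 => ?_)
    have hpρ : (p:ℤ) ∣ ρ := by
      refine Int.Prime.dvd_pow' (k := 2) pp ?_
      rw [hρ]; exact Dvd.dvd.mul_right (Dvd.dvd.mul_right hp1 m₁) N
    have : (p:ℤ) ∣ (gcd3 n₁ r₁ m₁ : ℤ) :=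
      Int.dvd_coe_gcd (Int.dvd_coe_gcd hp1 (by rw [hρdef]; exact Dvd.dvd.mul_left hpρ 2)) hp2
    rw [hg1] at this
    exact pp.one_lt.ne' (by exact_mod_cast Int.eq_one_of_dvd_one (by norm_num) this)
  have cn₂N' : IsCoprime n₂ N' := by
    refine coprime_of_primes _ _ (fun p pp hp1 hp2 => ?_)
    have hpd : (p:ℤ) ∣ d := Int.dvd_coe_gcd (hn₂ ▸ Dvd.dvd.mul_left hp1 d) (hN' ▸ Dvd.dvd.mul_left hp2 d)
    have : IsUnit ((p:ℤ)) := cdN'.isUnit_of_dvd' hpd hp2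
    rcases Int.isUnit_iff.mp this with h | h
    · exact pp.one_lt.ne' (by exact_mod_cast h)
    · have : (0:ℤ) ≤ p := Int.natCast_nonneg p
      omega
  have cn₂m₁ : IsCoprime n₂ m₁ := cn₁m₁.of_isCoprime_of_dvd_left ⟨d, by linarith [hn₂]⟩
  -- d ∣ ρ
  have hdρ : d ∣ ρ := by
    rw [← Int.pow_dvd_pow_iff (two_ne_zero)]
    rw [hρ, hn₂, hN']; exact ⟨n₂ * m₁ * N', by ring⟩
  obtain ⟨ρ₂, hρ₂def⟩ := hdρ
  have hρ₂sq : ρ₂ ^ 2 = n₂ * (m₁ * N') := by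
    have h2 : d^2 * ρ₂^2 = d^2 * (n₂ * (m₁ * N')) := by
      rw [hρ₂def, hn₂, hN'] at hρ; linear_combination hρ
    exact mul_left_cancel₀ (pow_ne_zero 2 hdpos.ne') h2
  -- squares
  have csq : IsCoprime n₂ (m₁ * N') := cn₂m₁.mul_right cn₂N'
  obtain ⟨α', hα'⟩ := Int.sq_of_isCoprime csq hρ₂sq.symm
  have hα2 : n₂ = α' ^ 2 := by
    rcases hα' with h | h
    · exact h
    · exfalso; linarith [sq_nonneg α', hn₂pos, h]
  obtain ⟨β, hβ'⟩ := Int.sq_of_isCoprime csq.symm (by linear_combination -hρ₂sq : (m₁ * N') * n₂ = ρ₂ ^ 2)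
  have hβ2 : m₁ * N' = β ^ 2 := by
    rcases hβ' with h | h
    · exact h
    · exfalso; linarith [sq_nonneg β, mul_pos hm₁pos hN'pos, h]
  -- N' ∣ β
  have hsfN' : Squarefree N' := hsf.squarefree_of_dvd ⟨d, by linarith [hN']⟩
  have hN'β : N' ∣ β := by
    rw [← hsfN'.dvd_pow_iff_dvd (two_ne_zero)]
    exact ⟨m₁, by linarith [hβ2]⟩
  obtain ⟨β', hβ'def⟩ := hN'β
  have hm₁eq : m₁ = N' * β' ^ 2 := by
    have h2 : N' * m₁ = N' * (N' * β' ^ 2) := by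
      rw [hβ'def] at hβ2; linear_combination hβ2
    exact mul_left_cancel₀ hN'pos.ne' h2
  -- epsilon
  have hβ2' : m₁ * N' = (N' * β') ^ 2 := by rw [← hβ'def]; exact hβ2
  have hεex : ρ₂ = α' * (N' * β') ∨ ρ₂ = -(α' * (N' * β')) := by
    have h0 : (ρ₂ - α' * (N' * β')) * (ρ₂ + α' * (N' * β')) = 0 := by
      linear_combination hρ₂sq + (m₁ * N') * hα2 + α' ^ 2 * hβ2'
    rcases mul_eq_zero.mp h0 with h | h
    · left; linarith
    · right; linarith
  obtain ⟨ε, hε2, hρ₂eq⟩ : ∃ ε : ℤ, ε * ε = 1 ∧ ρ₂ = ε * (α' * (N' * β')) := by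
    rcases hεex with h | h
    · exact ⟨1, by ring, by linarith⟩
    · exact ⟨-1, by ring, by linarith⟩
  -- pairwise coprimality for Bezout
  have cdβ' : IsCoprime d β' :=
    (cn₁m₁.of_isCoprime_of_dvd_left ⟨n₂, hn₂⟩).of_isCoprime_of_dvd_right
      ⟨N' * β', by rw [hm₁eq]; ring⟩
  have cα'N' : IsCoprime α' N' := cn₂N'.of_isCoprime_of_dvd_left ⟨α', by rw [hα2]; ring⟩
  have cα'β' : IsCoprime α' β' :=
    (cn₂m₁.of_isCoprime_of_dvd_left ⟨α', by rw [hα2]; ring⟩).of_isCoprime_of_dvd_right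
      ⟨N' * β', by rw [hm₁eq]; ring⟩
  have cAB : IsCoprime (d * α') (N' * β') :=
    (cdN'.mul_right cdβ').mul_left (cα'N'.mul_right cα'β')
  obtain ⟨u, v, hBez⟩ := cAB
  -- clean substitution equations
  have En : n = (t:ℤ) * d * α' ^ 2 := by rw [hn₁, hn₂, hα2]; ring
  have Em : m = (t:ℤ) * (N' * β' ^ 2) := by rw [hm₁, hm₁eq]
  have Er : r = 2 * (t:ℤ) * ε * (d * α') * (N' * β') := by
    rw [hr₁, hρdef, hρ₂def, hρ₂eq]; ring
  refine ⟨d, hdpos, ⟨N', hN'⟩, u, -(ε*β'), ε*v, α', ?_⟩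
  have := real_side N d u (-(ε*β')) (ε*v) α' n r m t hdpos
    (by rw [hN']; linear_combination d * hBez + (β'*d*N'*v) * hε2)
    (by rw [En, Er, Em, hN']
        linear_combination ((t:ℤ)*d*(u*(d*α') + v*(N'*β') + 1)) * hBez +
          (2*(t:ℤ)*u*v*α'*β'*N'*d^2 + (t:ℤ)*v^2*N'^2*β'^2*d) * hε2)
    (by rw [En, Er, Em, hN']
        linear_combination (-2*(t:ℤ)*ε*v*α'*β'^2*N'^2*d^2) * hε2)
    (by rw [En, Er, Em, hN']
        linear_combination (-(t:ℤ)*α'^2*β'^2*N'^2*d^3) * hε2)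
  exact ⟨this.1, this.2⟩
end
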